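/- arXiv:1506.04532 — 7 statements merged into one kernel-verified Lean document; each statement's English description precedes it below -/
import Mathlib

section
/- Let f: Γ → Γ be a graph self-map with no contracted edges. Then the relation on edges at a common vertex, declaring e ~ e' iff some power of f maps e and e' to edge paths with a non-trivial common initial subpath, is an equivalence relation, and f is a gate structure morphism with respect to the resulting intrinsic gate structure G(f), with injective induced map on gates. -/
/-!
Common combinatorial framework for train tracks (Coulbois–Lustig,
"Long turns, INP's and index for free group automorphisms").

A graph is finite, with an involutive fixed-point-free edge reversal `bar`.
Edge paths are lists of oriented edges.  A graph map sends vertices to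
vertices and edges to edge paths (compatibly with reversal and initial
vertices).  Gate structures, legal paths, train track morphisms, long turns,
legalizing maps, the intrinsic gate structure, Whitehead graphs and
transition matrices are defined combinatorially below.
-/

structure TTGraph where
  V : Type
  E : Type
  decV : DecidableEq V
  decE : DecidableEq E
  fintV : Fintype V
  fintE : Fintype E
  init : E → V
  bar : E → E
  bar_bar : ∀ e, bar (bar e) = e
  bar_ne : ∀ e, bar e ≠ e

namespace TTGraph

variable (G : TTGraph)

/-- terminal vertex of an oriented edge -/
def ter (e : G.E) : G.V := G.init (G.bar e)

/-- `l` is an edge path: consecutive edges are concatenable -/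
def IsPath (l : List G.E) : Prop :=
  l.Chain' fun e e' => G.ter e = G.init e'

end TTGraph

/-- A graph map: vertices to vertices, edges to edge paths. -/
structure GraphMap (G G' : TTGraph) where
  vmap : G.V → G'.V
  emap : G.E → List G'.E
  emap_path : ∀ e, G'.IsPath (emap e)
  emap_bar : ∀ e, emap (G.bar e) = (emap e).reverse.map G'.bar
  emap_head : ∀ e d, (emap e).head? = some d → G'.init d = vmap (G.init e)

namespace GraphMap

variable {G G' : TTGraph}

/-- image of an edge path under a graph map -/
def mapPath (f : GraphMap G G') (l : List G.E) : List G'.E := l.flatMap f.emap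

/-- iterated image of an edge path under a graph self-map: `f^t` applied to `l` -/
def iterMap (f : GraphMap G G) (t : ℕ) : List G.E → List G.E := f.mapPath^[t]

end GraphMap

/-- `h` is the composition `g ∘ f` of graph maps. -/
def IsComp {G G' G'' : TTGraph} (h : GraphMap G G'') (g : GraphMap G' G'') (f : GraphMap G G') :
    Prop :=
  (∀ v, h.vmap v = g.vmap (f.vmap v)) ∧ ∀ e, h.emap e = (f.emap e).flatMap g.emap

/-- A gate structure: an equivalence relation on oriented edges, only relating
edges with a common initial vertex; classes are the gates. -/
structure GateStruct (G : TTGraph) where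
  rel : G.E → G.E → Prop
  refl : ∀ e, rel e e
  symm : ∀ {e e'}, rel e e' → rel e' e
  trans : ∀ {a b c}, rel a b → rel b c → rel a c
  same_init : ∀ {e e'}, rel e e' → G.init e = G.init e'

/-- A legal edge path: a path which never crosses an illegal turn
(the turn crossed between consecutive edges `e, e'` is `(bar e, e')`). -/
def Legal (G : TTGraph) (S : GateStruct G) (l : List G.E) : Prop :=
  G.IsPath l ∧ l.Chain' fun e e' => ¬ S.rel (G.bar e) e'

/-- A reduced edge path: no backtracking subpath. -/
def Reduced (G : TTGraph) (l : List G.E) : Prop :=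
  l.Chain' fun e e' => e' ≠ G.bar e

/-- Train track morphism: no contracted edges, legal paths map to legal paths. -/
def IsTT {G G' : TTGraph} (S : GateStruct G) (S' : GateStruct G') (f : GraphMap G G') : Prop :=
  (∀ e, f.emap e ≠ []) ∧ ∀ l, Legal G S l → Legal G' S' (f.mapPath l)

/-- Entry of the transition matrix: number of times `f(e)` crosses `e'` or its inverse. -/
def transEntry {G G' : TTGraph} (f : GraphMap G G') (e' : G'.E) (e : G.E) : ℕ :=
  letI := G'.decE
  (f.emap e).count e' + (f.emap e).count (G'.bar e')

/-- The transition matrix of a graph map, indexed by sections (orientations)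
`pos`, `pos'` of the unoriented edge sets. -/
def transMatrix {G G' : TTGraph} (f : GraphMap G G') (pos : G.E → Bool) (pos' : G'.E → Bool) :
    Matrix {e : G'.E // pos' e = true} {e : G.E // pos e = true} ℕ :=
  fun e' e => transEntry f e'.1 e.1

/-- A long turn: two non-trivial legal paths with common initial vertex and
distinct first edges. -/
def IsLongTurn (G : TTGraph) (S : GateStruct G) (γ γ' : List G.E) : Prop :=
  Legal G S γ ∧ Legal G S γ' ∧ γ ≠ [] ∧ γ' ≠ [] ∧
    ∀ d d', γ.head? = some d → γ'.head? = some d' → G.init d = G.init d' ∧ d ≠ d'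

/-- An illegal long turn: the two initial edges lie in the same gate. -/
def IllegalLT (G : TTGraph) (S : GateStruct G) (γ γ' : List G.E) : Prop :=
  IsLongTurn G S γ γ' ∧ ∃ d d', γ.head? = some d ∧ γ'.head? = some d' ∧ S.rel d d'

/-- The initial edges of the two paths lie in distinct gates (legal long turn condition). -/
def LegalHeads (G : TTGraph) (S : GateStruct G) (γ γ' : List G.E) : Prop :=
  ∀ d d', γ.head? = some d → γ'.head? = some d' → ¬ S.rel d d'

/-- `(δ, δ')` is the `F`-image of the long turn `(γ, γ')`: removing the maximal
common initial subpath `γ₀` of the two image paths leaves two non-trivial paths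
with distinct first edges.  When such `δ, δ'` exist the long turn is `F`-long. -/
def IsLTImageF {G G' : TTGraph} (F : List G.E → List G'.E) (γ γ' : List G.E)
    (δ δ' : List G'.E) : Prop :=
  ∃ γ₀ : List G'.E, F γ = γ₀ ++ δ ∧ F γ' = γ₀ ++ δ' ∧ δ ≠ [] ∧ δ' ≠ [] ∧ δ.head? ≠ δ'.head?

/-- A map of paths is legalizing: every illegal long turn which is `F`-long has
legal `F`-image. -/
def LegalizingF {G G' : TTGraph} (S : GateStruct G) (S' : GateStruct G')
    (F : List G.E → List G'.E) : Prop :=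
  ∀ γ γ' δ δ', IllegalLT G S γ γ' → IsLTImageF F γ γ' δ δ' → LegalHeads G' S' δ δ'

/-- `Cb` is a cancellation bound for `F`: for any long turn, any common initial
subpath of the two images has length at most `Cb`. -/
def CancelBoundF {G G' : TTGraph} (S : GateStruct G) (F : List G.E → List G'.E) (Cb : ℕ) : Prop :=
  ∀ γ γ', IsLongTurn G S γ γ' → ∀ p, p <+: F γ → p <+: F γ' → p.length ≤ Cb

/-- `F` is strongly `K`-expanding: every legal path of length at least `K` has
strictly longer image. -/
def StronglyExpandingF {G G' : TTGraph} (S : GateStruct G) (F : List G.E → List G'.E)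
    (K : ℕ) : Prop :=
  ∀ γ, Legal G S γ → K ≤ γ.length → γ.length + 1 ≤ (F γ).length

/-- The intrinsic gate relation of a self-map `f`: two edges at a common vertex
are related iff some positive power of `f` maps them to edge paths with a
non-trivial common initial subpath (i.e. with the same first edge). -/
def IntrinsicRel {G : TTGraph} (f : GraphMap G G) (e e' : G.E) : Prop :=
  G.init e = G.init e' ∧
    ∃ t, 1 ≤ t ∧ ∃ d, (f.iterMap t [e]).head? = some d ∧ (f.iterMap t [e']).head? = some d

/-- `f` is gate-stable with respect to `S`: it fixes every vertex and every gate. -/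
def GateStable {G : TTGraph} (S : GateStruct G) (f : GraphMap G G) : Prop :=
  (∀ v, f.vmap v = v) ∧ ∀ e d, (f.emap e).head? = some d → S.rel e d

/-- `f` is expanding: every edge eventually has image of combinatorial length ≥ 2. -/
def ExpandingTT {G : TTGraph} (f : GraphMap G G) : Prop :=
  ∀ e, ∃ t, 1 ≤ t ∧ 2 ≤ (f.iterMap t [e]).length

/-- One step of the induced map `f^{LT_C}` on long turns of branch length `C`:
take the `f`-image and truncate both branches to length `C`. -/
def LTCstep {G : TTGraph} (f : GraphMap G G) (C : ℕ) (p q : List G.E × List G.E) : Prop :=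
  ∃ δ δ', IsLTImageF f.mapPath p.1 p.2 δ δ' ∧
    q.1 <+: δ ∧ q.2 <+: δ' ∧ q.1.length = C ∧ q.2.length = C

/-- `f` possesses a periodic INP: combinatorially, there is an illegal long turn
`(γ, γ')` and `t ≥ 1` such that `f^t` maps each branch over itself after a common
cancelled initial piece `ρ` (the INP is the subpath of `γ̄ ∘ γ'` joining the two
resulting fixed points of `f^t`). -/
def HasPeriodicINP {G : TTGraph} (S : GateStruct G) (f : GraphMap G G) : Prop :=
  ∃ γ γ' ρ t, 1 ≤ t ∧ IllegalLT G S γ γ' ∧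
    (ρ ++ γ) <+: f.iterMap t γ ∧ (ρ ++ γ') <+: f.iterMap t γ'

/-- The path `l` crosses over the gate turn represented by the edges `(a, b)`:
it contains a subpath `ē·e'` with `e` in the gate of `a` and `e'` in the gate of
`b` (or vice versa). -/
def CrossesGT {G : TTGraph} (S : GateStruct G) (l : List G.E) (a b : G.E) : Prop :=
  ∃ x y, [x, y] <:+: l ∧
    ((S.rel (G.bar x) a ∧ S.rel y b) ∨ (S.rel (G.bar x) b ∧ S.rel y a))

/-- Edge of the gate-Whitehead-graph of `f` at `v`, between the gates of the
edges `a` and `b` at `v`: some `f^t(e)` (`t ≥ 1`) crosses over this gate turn. -/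
def WhEdge {G : TTGraph} (S : GateStruct G) (f : GraphMap G G) (v : G.V) (a b : G.E) : Prop :=
  G.init a = v ∧ G.init b = v ∧ ∃ t, 1 ≤ t ∧ ∃ e, CrossesGT S (f.iterMap t [e]) a b

/-- All gate-Whitehead-graphs of `f` are connected. -/
def WhConnected {G : TTGraph} (S : GateStruct G) (f : GraphMap G G) : Prop :=
  ∀ v a b, G.init a = v → G.init b = v →
    Relation.ReflTransGen (fun x y => S.rel x y ∨ WhEdge S f v x y) a b

/-- The path map obtained by composing a list of graph self-maps (applied left to right). -/
def compPathFun {G : TTGraph} (l : List (GraphMap G G)) : List G.E → List G.E :=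
  l.foldl (fun F m => m.mapPath ∘ F) id

section Aux

variable {G : TTGraph} (f : GraphMap G G) (hne : ∀ e, f.emap e ≠ [])
include hne

/-- the differential: first edge of the image of an edge -/
noncomputable def Df (e : G.E) : G.E := (f.emap e).head (hne e)

lemma emap_head_eq (e : G.E) : (f.emap e).head? = some (Df f hne e) :=
  List.head?_eq_head (hne e)

lemma head_mapPath {l : List G.E} {d : G.E} (h : l.head? = some d) :
    (f.mapPath l).head? = (f.emap d).head? := by
  cases l with
  | nil => simp at h
  | cons a rest =>
    obtain rfl : a = d := by simpa using h
    show (f.emap a ++ rest.flatMap f.emap).head? = _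
    exact List.head?_append_of_ne_nil _ (hne a)

lemma head_iterMap (t : ℕ) (e : G.E) :
    (f.iterMap t [e]).head? = some ((Df f hne)^[t] e) := by
  induction t with
  | zero => simp [GraphMap.iterMap]
  | succ t ih =>
    have : f.iterMap (t + 1) [e] = f.mapPath (f.iterMap t [e]) := by
      simp [GraphMap.iterMap, Function.iterate_succ_apply']
    rw [this, head_mapPath f hne ih, emap_head_eq f hne,
      Function.iterate_succ_apply']

lemma iter_eq_mono {e e' : G.E} {t : ℕ} (h : (Df f hne)^[t] e = (Df f hne)^[t] e')
    {s : ℕ} (hs : t ≤ s) : (Df f hne)^[s] e = (Df f hne)^[s] e' := by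
  obtain ⟨k, rfl⟩ := Nat.exists_eq_add_of_le hs
  rw [Nat.add_comm, Function.iterate_add_apply, Function.iterate_add_apply, h]

lemma intrinsicRel_iff (e e' : G.E) :
    IntrinsicRel f e e' ↔
      G.init e = G.init e' ∧ ∃ t, 1 ≤ t ∧ (Df f hne)^[t] e = (Df f hne)^[t] e' := by
  constructor
  · rintro ⟨hv, t, ht, d, h1, h2⟩
    refine ⟨hv, t, ht, ?_⟩
    rw [head_iterMap f hne] at h1 h2
    rw [Option.some.injEq] at h1 h2
    rw [h1, h2]
  · rintro ⟨hv, t, ht, h⟩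
    exact ⟨hv, t, ht, (Df f hne)^[t] e, head_iterMap f hne t e,
      h ▸ head_iterMap f hne t e'⟩

end Aux

/-- for a graph self-map `f` with no contracted edges, the
intrinsic gate relation is an equivalence relation, and `f` is a gate structure
morphism with respect to it with injective induced map on gates (for edges
`e, e'` at a common vertex with `d, d'` the first edges of `f(e), f(e')`, one
has `e ~ e'` iff `d ~ d'`; `→` is well-definedness of the map on gates, `←` its
injectivity). -/
theorem intrinsic_gate_structure {G : TTGraph} (f : GraphMap G G)
    (hne : ∀ e, f.emap e ≠ []) :
    Equivalence (IntrinsicRel f) ∧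
      (∀ e e' d d', G.init e = G.init e' →
        (f.emap e).head? = some d → (f.emap e').head? = some d' →
        (IntrinsicRel f e e' ↔ IntrinsicRel f d d')) := by
  have key := intrinsicRel_iff f hne
  constructor
  · constructor
    · intro e
      exact (key e e).2 ⟨rfl, 1, le_refl 1, rfl⟩
    · intro e e' h
      obtain ⟨hv, t, ht, hd⟩ := (key e e').1 h
      exact (key e' e).2 ⟨hv.symm, t, ht, hd.symm⟩
    · intro a b c hab hbc
      obtain ⟨hv1, t1, ht1, hd1⟩ := (key a b).1 hab
      obtain ⟨hv2, t2, ht2, hd2⟩ := (key b c).1 hbc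
      refine (key a c).2 ⟨hv1.trans hv2, max t1 t2, le_trans ht1 (le_max_left _ _), ?_⟩
      exact (iter_eq_mono f hne hd1 (le_max_left _ _)).trans
        (iter_eq_mono f hne hd2 (le_max_right _ _))
  · intro e e' d d' hv hd hd'
    have hde : d = Df f hne e := by
      rw [emap_head_eq f hne] at hd; exact (Option.some.injEq _ _).mp hd.symm
    have hde' : d' = Df f hne e' := by
      rw [emap_head_eq f hne] at hd'; exact (Option.some.injEq _ _).mp hd'.symm
    have hvd : G.init d = G.init d' := by
      rw [f.emap_head e d hd, f.emap_head e' d' hd', hv]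
    subst hde hde'
    constructor
    · intro h
      obtain ⟨_, t, ht, hd⟩ := (key e e').1 h
      refine (key _ _).2 ⟨hvd, t, ht, ?_⟩
      rw [← Function.iterate_succ_apply, ← Function.iterate_succ_apply]
      exact iter_eq_mono f hne hd (Nat.le_succ t)
    · intro h
      obtain ⟨_, t, ht, hd⟩ := (key _ _).1 h
      refine (key e e').2 ⟨hv, t + 1, le_trans ht (Nat.le_succ t), ?_⟩
      rw [Function.iterate_succ_apply, Function.iterate_succ_apply]
      exact hd
end

section
/- Let f: Γ → Γ' and g: Γ' → Γ'' be train track morphisms with the same gate structure on Γ'. A long turn (γ₁, γ₂) in Γ is (g∘f)-long if and only if (γ₁, γ₂) is f-long and its f-image long turn is g-long; in that case (g∘f)^{LT}(γ₁,γ₂) = g^{LT}(f^{LT}(γ₁,γ₂)). -/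
private lemma split_common {α : Type _} : ∀ (a b : List α), ∃ p u v, a = p ++ u ∧ b = p ++ v ∧
    (u = [] ∨ v = [] ∨ u.head? ≠ v.head?)
  | [], b => ⟨[], [], b, rfl, rfl, Or.inl rfl⟩
  | a::as, [] => ⟨[], a::as, [], rfl, rfl, Or.inr (Or.inl rfl)⟩
  | a::as, b::bs => by
    by_cases hab : a = b
    · obtain ⟨p, u, v, h1, h2, h3⟩ := split_common as bs
      subst hab
      exact ⟨a::p, u, v, by simp [h1], by simp [h2], h3⟩
    · exact ⟨[], a::as, b::bs, rfl, rfl, Or.inr (Or.inr (by simp [hab]))⟩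

private lemma mapPath_append {G G' : TTGraph} (m : GraphMap G G') (a b : List G.E) :
    m.mapPath (a ++ b) = m.mapPath a ++ m.mapPath b :=
  List.flatMap_append (xs := a) (ys := b) (f := m.emap)

/-- for train track morphisms `f, g` (same gate structure on the
middle graph) and `h = g ∘ f`, a long turn is `h`-long iff it is `f`-long with
`g`-long `f`-image; in that case `h^{LT} = g^{LT} ∘ f^{LT}`. -/
theorem longturn_image_comp {G G' G'' : TTGraph} (S : GateStruct G)
    (S' : GateStruct G') (S'' : GateStruct G'') (f : GraphMap G G')
    (g : GraphMap G' G'') (h : GraphMap G G'')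
    (hf : IsTT S S' f) (hg : IsTT S' S'' g) (hcomp : IsComp h g f)
    (γ γ' : List G.E) (hLT : IsLongTurn G S γ γ') :
    ((∃ δ δ', IsLTImageF h.mapPath γ γ' δ δ') ↔
      (∃ δ δ', IsLTImageF f.mapPath γ γ' δ δ' ∧
        ∃ ε ε', IsLTImageF g.mapPath δ δ' ε ε')) ∧
    (∀ δ δ' ε ε', IsLTImageF f.mapPath γ γ' δ δ' →
      IsLTImageF g.mapPath δ δ' ε ε' → IsLTImageF h.mapPath γ γ' ε ε') := by
  have hH : ∀ l : List G.E, h.mapPath l = g.mapPath (f.mapPath l) := by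
    intro l
    show l.flatMap h.emap = (l.flatMap f.emap).flatMap g.emap
    rw [List.flatMap_assoc]
    exact List.flatMap_congr fun e _ => hcomp.2 e
  have part2 : ∀ δ δ' ε ε', IsLTImageF f.mapPath γ γ' δ δ' →
      IsLTImageF g.mapPath δ δ' ε ε' → IsLTImageF h.mapPath γ γ' ε ε' := by
    rintro δ δ' ε ε' ⟨γ₀, h1, h2, -, -, -⟩ ⟨δ₀, g1, g2, he, he', hhd⟩
    refine ⟨g.mapPath γ₀ ++ δ₀, ?_, ?_, he, he', hhd⟩
    · rw [hH, h1, mapPath_append, g1, List.append_assoc]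
    · rw [hH, h2, mapPath_append, g2, List.append_assoc]
  refine ⟨⟨?_, ?_⟩, part2⟩
  · rintro ⟨δH, δH', η₀, hγ, hγ', hne, hne', hhead⟩
    obtain ⟨p, u, v, hu, hv, hdisj⟩ := split_common (f.mapPath γ) (f.mapPath γ')
    have hHγ : h.mapPath γ = g.mapPath p ++ g.mapPath u := by
      rw [hH, hu, mapPath_append]
    have hHγ' : h.mapPath γ' = g.mapPath p ++ g.mapPath v := by
      rw [hH, hv, mapPath_append]
    -- u and v are nonempty
    have hune : u ≠ [] := by
      rintro rfl
      have : η₀ ++ δH' = (η₀ ++ δH) ++ g.mapPath v := by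
        rw [← hγ', ← hγ, hHγ', hHγ]; simp [GraphMap.mapPath]
      rw [List.append_assoc] at this
      have h2 := List.append_cancel_left this
      apply hhead
      rw [h2]
      cases δH with
      | nil => exact absurd rfl hne
      | cons a l => simp
    have hvne : v ≠ [] := by
      rintro rfl
      have : η₀ ++ δH = (η₀ ++ δH') ++ g.mapPath u := by
        rw [← hγ', ← hγ, hHγ', hHγ]; simp [GraphMap.mapPath]
      rw [List.append_assoc] at this
      have h2 := List.append_cancel_left this
      apply hhead
      rw [h2]
      cases δH' with
      | nil => exact absurd rfl hne'
      | cons a l => simp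
    have hhd : u.head? ≠ v.head? := by
      rcases hdisj with h' | h' | h'
      · exact absurd h' hune
      · exact absurd h' hvne
      · exact h'
    -- g.mapPath p is a prefix of η₀
    have hpref : g.mapPath p <+: η₀ := by
      have p1 : g.mapPath p <+: h.mapPath γ := ⟨g.mapPath u, hHγ.symm⟩
      have p2 : η₀ <+: h.mapPath γ := ⟨δH, hγ.symm⟩
      rcases List.prefix_or_prefix_of_prefix p1 p2 with hc | hc
      · exact hc
      · obtain ⟨r, hr⟩ := hc
        cases r with
        | nil => exact ⟨[], by simp [← hr]⟩
        | cons x xs =>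
          exfalso
          have e1 : δH = (x::xs) ++ g.mapPath u := by
            apply List.append_cancel_left (as := η₀)
            rw [← hγ, hHγ, ← hr, List.append_assoc]
          have e2 : δH' = (x::xs) ++ g.mapPath v := by
            apply List.append_cancel_left (as := η₀)
            rw [← hγ', hHγ', ← hr, List.append_assoc]
          exact hhead (by rw [e1, e2]; simp)
    obtain ⟨δ₀, hδ₀⟩ := hpref
    have gu : g.mapPath u = δ₀ ++ δH := by
      apply List.append_cancel_left (as := g.mapPath p)
      rw [← hHγ, hγ, ← hδ₀, List.append_assoc]
    have gv : g.mapPath v = δ₀ ++ δH' := by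
      apply List.append_cancel_left (as := g.mapPath p)
      rw [← hHγ', hγ', ← hδ₀, List.append_assoc]
    exact ⟨u, v, ⟨p, hu, hv, hune, hvne, hhd⟩, δH, δH',
      ⟨δ₀, gu, gv, hne, hne', hhead⟩⟩
  · rintro ⟨δ, δ', h1, ε, ε', h2⟩
    exact ⟨ε, ε', part2 δ δ' ε ε' h1 h2⟩
end

section
/- Let g: Γ → Γ be a train track morphism with respect to a gate structure G that is both legalizing and gate-stable. Then G equals the intrinsic gate structure G(g). Moreover, for any other train track morphism f: Γ → Γ with respect to G, the intrinsic gate structure G(f∘g) also equals G. -/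
section Aux

variable {G G' : TTGraph}

lemma aux_exists_head {l : List G.E} (h : l ≠ []) : ∃ a, l.head? = some a := by
  cases l with
  | nil => exact absurd rfl h
  | cons a t => exact ⟨a, rfl⟩

lemma aux_mapPath_singleton (f : GraphMap G G') (e : G.E) :
    f.mapPath [e] = f.emap e := by
  simp [GraphMap.mapPath]

lemma aux_mapPath_cons (f : GraphMap G G') (e : G.E) (t : List G.E) :
    f.mapPath (e :: t) = f.emap e ++ f.mapPath t := by
  simp [GraphMap.mapPath]

lemma aux_mapPath_append (f : GraphMap G G') (a b : List G.E) :
    f.mapPath (a ++ b) = f.mapPath a ++ f.mapPath b := by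
  simp [GraphMap.mapPath]

lemma aux_mapPath_ne_nil (f : GraphMap G G') (hne : ∀ e, f.emap e ≠ [])
    {l : List G.E} (hl : l ≠ []) : f.mapPath l ≠ [] := by
  cases l with
  | nil => exact absurd rfl hl
  | cons a t =>
    rw [aux_mapPath_cons]
    intro hc
    exact hne a (List.append_eq_nil_iff.mp hc).1

lemma aux_head_mapPath (f : GraphMap G G') (hne : ∀ e, f.emap e ≠ [])
    {l : List G.E} {d : G.E} (hd : l.head? = some d) :
    (f.mapPath l).head? = (f.emap d).head? := by
  cases l with
  | nil => simp at hd
  | cons a t =>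
    simp only [List.head?_cons, Option.some_inj] at hd
    subst hd
    rw [aux_mapPath_cons]
    obtain ⟨x, xs, hx⟩ := List.exists_cons_of_ne_nil (hne a)
    rw [hx]
    rfl

lemma aux_mapPath_revbar (f : GraphMap G G') (l : List G.E) :
    f.mapPath (l.reverse.map G.bar) = (f.mapPath l).reverse.map G'.bar := by
  induction l with
  | nil => rfl
  | cons e t ih =>
    rw [aux_mapPath_cons]
    simp only [List.reverse_cons, List.map_append, List.map_cons, List.map_nil]
    rw [aux_mapPath_append, ih, aux_mapPath_singleton, f.emap_bar]
    simp

lemma aux_iterMap_ne_nil (f : GraphMap G G) (hne : ∀ e, f.emap e ≠ [])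
    (t : ℕ) {l : List G.E} (hl : l ≠ []) : f.iterMap t l ≠ [] := by
  induction t with
  | zero => exact hl
  | succ n ih =>
    show f.mapPath^[n+1] l ≠ []
    rw [Function.iterate_succ_apply']
    exact aux_mapPath_ne_nil f hne ih

lemma aux_iterMap_append (f : GraphMap G G) (t : ℕ) (a b : List G.E) :
    f.iterMap t (a ++ b) = f.iterMap t a ++ f.iterMap t b := by
  induction t with
  | zero => rfl
  | succ n ih =>
    show f.mapPath^[n+1] _ = f.mapPath^[n+1] _ ++ f.mapPath^[n+1] _
    rw [Function.iterate_succ_apply', Function.iterate_succ_apply',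
      Function.iterate_succ_apply']
    rw [show f.mapPath^[n] (a ++ b) = f.iterMap n (a ++ b) from rfl, ih]
    exact aux_mapPath_append f _ _

lemma aux_iterMap_revbar (f : GraphMap G G) (t : ℕ) (l : List G.E) :
    f.iterMap t (l.reverse.map G.bar) = (f.iterMap t l).reverse.map G.bar := by
  induction t with
  | zero => rfl
  | succ n ih =>
    show f.mapPath^[n+1] (l.reverse.map G.bar) = (f.mapPath^[n+1] l).reverse.map G.bar
    rw [Function.iterate_succ_apply', Function.iterate_succ_apply',
      show f.mapPath^[n] (l.reverse.map G.bar) = f.iterMap n (l.reverse.map G.bar) from rfl,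
      ih]
    exact aux_mapPath_revbar f _

lemma aux_legal_iter {S : GateStruct G} (f : GraphMap G G) (hTT : IsTT S S f)
    (t : ℕ) {l : List G.E} (hl : Legal G S l) : Legal G S (f.iterMap t l) := by
  induction t with
  | zero => exact hl
  | succ n ih =>
    show Legal G S (f.mapPath^[n+1] l)
    rw [Function.iterate_succ_apply']
    exact hTT.2 _ ih

/-- Heads of iterated images of edges whose turn is legal lie in distinct gates. -/
lemma aux_heads_ne {G : TTGraph} (S : GateStruct G) (F : GraphMap G G) (hTT : IsTT S S F)
    (e e' : G.E) (hinit : G.init e = G.init e') (hrel : ¬ S.rel e e') (t : ℕ)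
    (d d' : G.E) (hd : (F.iterMap t [e]).head? = some d)
    (hd' : (F.iterMap t [e']).head? = some d') : ¬ S.rel d' d := by
  have hp : Legal G S ([G.bar e'] ++ [e]) := by
    constructor
    · refine List.isChain_pair.mpr ?_
      show G.init (G.bar (G.bar e')) = G.init e
      rw [G.bar_bar]; exact hinit.symm
    · refine List.isChain_pair.mpr ?_
      rw [G.bar_bar]; exact fun hc => hrel (S.symm hc)
  have hlt : Legal G S (F.iterMap t ([G.bar e'] ++ [e])) := aux_legal_iter F hTT t hp
  rw [aux_iterMap_append] at hlt
  have h2 := hlt.2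
  replace h2 := List.isChain_append.mp h2
  have hlast : (F.iterMap t [G.bar e']).getLast? = some (G.bar d') := by
    have : [G.bar e'] = ([e'].reverse.map G.bar) := by simp
    rw [this, aux_iterMap_revbar]
    simp [List.getLast?_map, List.getLast?_reverse, hd']
  have := h2.2.2 (G.bar d') (by rw [hlast]; rfl) d (by rw [hd]; rfl)
  rw [G.bar_bar] at this
  exact this

/-- Key forward step: edges in the same gate have `g`-images with the same head. -/
lemma aux_head_eq {G : TTGraph} (S : GateStruct G) (g : GraphMap G G) (hTTg : IsTT S S g)
    (hleg : LegalizingF S S g.mapPath) (hgs : GateStable S g)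
    {e e' : G.E} (hrel : S.rel e e') : (g.emap e).head? = (g.emap e').head? := by
  by_cases hee : e = e'
  · rw [hee]
  obtain ⟨a, ha⟩ := aux_exists_head (hTTg.1 e)
  obtain ⟨b, hb⟩ := aux_exists_head (hTTg.1 e')
  rw [ha, hb]
  by_contra hab
  have hlegal : ∀ x : G.E, Legal G S [x] := fun x =>
    ⟨List.isChain_singleton _, List.isChain_singleton _⟩
  have hILT : IllegalLT G S [e] [e'] := by
    refine ⟨⟨hlegal e, hlegal e', List.cons_ne_nil _ _, List.cons_ne_nil _ _, ?_⟩,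
      e, e', rfl, rfl, hrel⟩
    intro d d' hd hd'
    simp only [List.head?_cons, Option.some_inj] at hd hd'
    subst hd; subst hd'
    exact ⟨S.same_init hrel, hee⟩
  have hImg : IsLTImageF g.mapPath [e] [e'] (g.emap e) (g.emap e') := by
    refine ⟨[], by rw [aux_mapPath_singleton]; rfl, by rw [aux_mapPath_singleton]; rfl,
      hTTg.1 e, hTTg.1 e', ?_⟩
    rw [ha, hb]; exact hab
  have hLH := hleg _ _ _ _ hILT hImg a b ha hb
  exact hLH (S.trans (S.trans (S.symm (hgs.2 e a ha)) hrel) (hgs.2 e' b hb))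

end Aux

/-- if `g` is a legalizing, gate-stable train track self-morphism
with respect to `S`, then `S` equals the intrinsic gate structure `G(g)`;
moreover for any train track morphism `f` with respect to `S`, the intrinsic
gate structure `G(f ∘ g)` also equals `S`. -/
theorem legalizing_gate_stable_intrinsic {G : TTGraph} (S : GateStruct G)
    (g : GraphMap G G) (hTTg : IsTT S S g)
    (hleg : LegalizingF S S g.mapPath) (hgs : GateStable S g)
    (f : GraphMap G G) (hTTf : IsTT S S f)
    (h : GraphMap G G) (hcomp : IsComp h f g) :
    (∀ e e', S.rel e e' ↔ IntrinsicRel g e e') ∧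
      (∀ e e', S.rel e e' ↔ IntrinsicRel h e e') := by
  have hhemap : ∀ e, h.emap e = f.mapPath (g.emap e) := fun e => hcomp.2 e
  have hhmap : ∀ l, h.mapPath l = f.mapPath (g.mapPath l) := by
    intro l
    induction l with
    | nil => rfl
    | cons a t ih =>
      rw [aux_mapPath_cons, aux_mapPath_cons, aux_mapPath_append, ih, hhemap]
  have hTTh : IsTT S S h := by
    constructor
    · intro e
      rw [hhemap]
      exact aux_mapPath_ne_nil f hTTf.1 (hTTg.1 e)
    · intro l hl
      rw [hhmap]
      exact hTTf.2 _ (hTTg.2 _ hl)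
  have hiter1 : ∀ (F : GraphMap G G) (l : List G.E), F.iterMap 1 l = F.mapPath l :=
    fun F l => rfl
  constructor
  · intro e e'
    constructor
    · intro hrel
      refine ⟨S.same_init hrel, 1, le_refl 1, ?_⟩
      obtain ⟨a, ha⟩ := aux_exists_head (hTTg.1 e)
      refine ⟨a, ?_, ?_⟩
      · rw [hiter1, aux_mapPath_singleton]; exact ha
      · rw [hiter1, aux_mapPath_singleton, ← aux_head_eq S g hTTg hleg hgs hrel]
        exact ha
    · rintro ⟨hinit, t, _, d, hd, hd'⟩
      by_contra hne
      exact aux_heads_ne S g hTTg e e' hinit hne t d d hd hd' (S.refl d)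
  · intro e e'
    constructor
    · intro hrel
      refine ⟨S.same_init hrel, 1, le_refl 1, ?_⟩
      obtain ⟨a, ha⟩ := aux_exists_head (hTTg.1 e)
      have ha' : (g.emap e').head? = some a := by
        rw [← aux_head_eq S g hTTg hleg hgs hrel]; exact ha
      obtain ⟨d, hdd⟩ := aux_exists_head (hTTf.1 a)
      refine ⟨d, ?_, ?_⟩
      · rw [hiter1, aux_mapPath_singleton, hhemap, aux_head_mapPath f hTTf.1 ha]
        exact hdd
      · rw [hiter1, aux_mapPath_singleton, hhemap, aux_head_mapPath f hTTf.1 ha']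
        exact hdd
    · rintro ⟨hinit, t, _, d, hd, hd'⟩
      by_contra hne
      exact aux_heads_ne S h hTTh e e' hinit hne t d d hd hd' (S.refl d)
end

section
/- Every expanding train track morphism f: Γ → Γ on a finite graph has a positive power f^m that is strongly 1-expanding, i.e., |f^m(γ)| ≥ |γ| + 1 for every non-trivial legal edge path γ. -/
lemma mapPath_length_ge {G : TTGraph} (f : GraphMap G G) (hne : ∀ e, f.emap e ≠ [])
    (l : List G.E) : l.length ≤ (f.mapPath l).length := by
  induction l with
  | nil => simp [GraphMap.mapPath]
  | cons e t ih =>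
    have h1 : 1 ≤ (f.emap e).length := List.length_pos_iff.mpr (hne e)
    simp only [GraphMap.mapPath, List.flatMap_cons, List.length_append, List.length_cons]
    have : t.length ≤ (t.flatMap f.emap).length := ih
    omega

lemma iterMap_length_ge {G : TTGraph} (f : GraphMap G G) (hne : ∀ e, f.emap e ≠ [])
    (k : ℕ) (l : List G.E) : l.length ≤ (f.iterMap k l).length := by
  induction k generalizing l with
  | zero => simp [GraphMap.iterMap]
  | succ n ih =>
    have : f.iterMap (n + 1) l = f.iterMap n (f.mapPath l) := by
      simp [GraphMap.iterMap, Function.iterate_succ_apply]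
    rw [this]
    exact le_trans (mapPath_length_ge f hne l) (ih (f.mapPath l))

lemma iterMap_append {G : TTGraph} (f : GraphMap G G) (k : ℕ) (a b : List G.E) :
    f.iterMap k (a ++ b) = f.iterMap k a ++ f.iterMap k b := by
  induction k generalizing a b with
  | zero => simp [GraphMap.iterMap]
  | succ n ih =>
    simp only [GraphMap.iterMap, Function.iterate_succ_apply] at *
    rw [show f.mapPath (a ++ b) = f.mapPath a ++ f.mapPath b from
      List.flatMap_append (xs := a) (ys := b) (f := f.emap), ih]

/-- every expanding train track self-morphism of a finite graph
has a positive power `f^m` which is strongly 1-expanding: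
`|f^m(γ)| ≥ |γ| + 1` for every non-trivial legal edge path `γ`. -/
theorem expanding_power_strongly_one_expanding {G : TTGraph} (S : GateStruct G)
    (f : GraphMap G G) (hTT : IsTT S S f) (hexp : ExpandingTT f) :
    ∃ m, 1 ≤ m ∧ ∀ γ, Legal G S γ → γ ≠ [] →
      γ.length + 1 ≤ (f.iterMap m γ).length := by
  classical
  haveI := G.fintE
  have hne := hTT.1
  let t : G.E → ℕ := fun e => (hexp e).choose
  let m : ℕ := max 1 (Finset.univ.sup t)
  have hedge : ∀ e : G.E, 2 ≤ (f.iterMap m [e]).length := by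
    intro e
    obtain ⟨h1, h2⟩ := (hexp e).choose_spec
    have hle : t e ≤ m := le_max_of_le_right (Finset.le_sup (Finset.mem_univ e))
    have hm : m = (m - t e) + t e := by omega
    have : f.iterMap m [e] = f.iterMap (m - t e) (f.iterMap (t e) [e]) := by
      rw [hm]; simp [GraphMap.iterMap, Function.iterate_add_apply]
    rw [this]
    exact le_trans h2 (iterMap_length_ge f hne _ _)
  refine ⟨m, le_max_left _ _, fun γ _ hγne => ?_⟩
  obtain ⟨e, rest, rfl⟩ := List.exists_cons_of_ne_nil hγne
  have : f.iterMap m (e :: rest) = f.iterMap m [e] ++ f.iterMap m rest := by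
    simpa using iterMap_append f m [e] rest
  rw [this]
  have h1 := hedge e
  have h2 := iterMap_length_ge f hne m rest
  simp only [List.length_append, List.length_cons]
  omega
end

section
/- Let f: Γ → Γ be a train track map with cancellation bound C(f) which is strongly K-expanding. Set C(f)⁺ = max(K, C(f)/(λ − 1)) where λ = λ^K_min(f) > 1 is the minimal stretching factor for legal paths of length ≥ K. Then for every integer C ≥ C(f)⁺, every long turn with both branches of length C is f-long, its f-image has both branches of length ≥ C, and hence truncation to length C yields a well-defined map f^{LT_C} from LT_C(Γ) to itself. -/
/-- Longest common prefix of two lists. -/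
def myLcp {α : Type} [DecidableEq α] : List α → List α → List α
  | a :: l, b :: m => if a = b then a :: myLcp l m else []
  | _, _ => []

lemma myLcp_prefix_left {α : Type} [DecidableEq α] :
    ∀ l m : List α, myLcp l m <+: l
  | [], _ => by simp [myLcp]
  | _ :: _, [] => by simp [myLcp]
  | a :: l, b :: m => by
    by_cases h : a = b
    · subst h; simp only [myLcp, if_pos rfl]
      exact (List.cons_prefix_cons).mpr ⟨rfl, myLcp_prefix_left l m⟩
    · simp [myLcp, h]

lemma myLcp_prefix_right {α : Type} [DecidableEq α] :
    ∀ l m : List α, myLcp l m <+: m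
  | [], _ => by simp [myLcp]
  | _ :: _, [] => by simp [myLcp]
  | a :: l, b :: m => by
    by_cases h : a = b
    · subst h; simp only [myLcp, if_pos rfl]
      exact (List.cons_prefix_cons).mpr ⟨rfl, myLcp_prefix_right l m⟩
    · simp [myLcp, h]

lemma myLcp_head_ne {α : Type} [DecidableEq α] :
    ∀ (l m : List α) (d : α), (l.drop (myLcp l m).length).head? = some d →
      (m.drop (myLcp l m).length).head? = some d → False
  | [], _, d => by simp
  | _ :: _, [], d => by simp [myLcp]
  | a :: l, b :: m, d => by
    by_cases h : a = b
    · simpa [myLcp, h] using myLcp_head_ne l m d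
    · simp only [myLcp, if_neg h, List.length_nil, List.drop_zero, List.head?_cons,
        Option.some_inj]
      rintro rfl rfl; exact h rfl

/-- for a train track map `f` with cancellation bound `Cf`, strongly
`K`-expanding with minimal stretching factor `lam > 1` on legal paths of length
`≥ K`, and any integer `C ≥ C(f)⁺ = max(K, Cf/(lam−1))`, every long turn with
branches of length `C` is `f`-long with `f`-image branches of length `≥ C`;
hence truncation to length `C` yields a well-defined map `f^{LT_C}` on `LT_C(Γ)`. -/
theorem longturn_map_well_defined {G : TTGraph} (S : GateStruct G)
    (f : GraphMap G G) (hTT : IsTT S S f) (Cf K : ℕ) (hK : 1 ≤ K)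
    (hCb : CancelBoundF S f.mapPath Cf)
    (hexp : StronglyExpandingF S f.mapPath K)
    (lam : ℝ) (hlam : 1 < lam)
    (hmin : ∀ γ, Legal G S γ → K ≤ γ.length →
      lam * (γ.length : ℝ) ≤ ((f.mapPath γ).length : ℝ))
    (C : ℕ) (hCK : (K : ℝ) ≤ (C : ℝ)) (hCC : (Cf : ℝ) / (lam - 1) ≤ (C : ℝ)) :
    ∀ γ γ', IsLongTurn G S γ γ' → γ.length = C → γ'.length = C →
      ∃ δ δ', IsLTImageF f.mapPath γ γ' δ δ' ∧ C ≤ δ.length ∧ C ≤ δ'.length := by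
  classical
  intro γ γ' hLT hlen hlen'
  set A := f.mapPath γ with hA
  set B := f.mapPath γ' with hB
  set p := myLcp A B with hp
  have hpreA : p <+: A := myLcp_prefix_left A B
  have hpreB : p <+: B := myLcp_prefix_right A B
  have hnCf : p.length ≤ Cf := hCb γ γ' hLT p hpreA hpreB
  have hKC : K ≤ C := by exact_mod_cast hCK
  have hCfC : (Cf : ℝ) ≤ (C : ℝ) * (lam - 1) :=
    (div_le_iff₀ (by linarith)).mp hCC
  have hlenA : C + Cf ≤ A.length := by
    have h1 := hmin γ hLT.1 (by omega)
    rw [hlen] at h1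
    have : ((C + Cf : ℕ) : ℝ) ≤ (A.length : ℝ) := by
      push_cast; nlinarith
    exact_mod_cast this
  have hlenB : C + Cf ≤ B.length := by
    have h1 := hmin γ' hLT.2.1 (by omega)
    rw [hlen'] at h1
    have : ((C + Cf : ℕ) : ℝ) ≤ (B.length : ℝ) := by
      push_cast; nlinarith
    exact_mod_cast this
  refine ⟨A.drop p.length, B.drop p.length, ⟨p, ?_, ?_, ?_, ?_, ?_⟩, ?_, ?_⟩
  · exact (List.prefix_iff_eq_append.mp hpreA).symm
  · exact (List.prefix_iff_eq_append.mp hpreB).symm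
  · have : 0 < (A.drop p.length).length := by
      rw [List.length_drop]; omega
    exact List.ne_nil_of_length_pos this
  · have : 0 < (B.drop p.length).length := by
      rw [List.length_drop]; omega
    exact List.ne_nil_of_length_pos this
  · intro hcontra
    cases hd : (A.drop p.length).head? with
    | none =>
      have : A.drop p.length = [] := List.head?_eq_none_iff.mp hd
      have : 0 < (A.drop p.length).length := by rw [List.length_drop]; omega
      simp_all
    | some d =>
      exact myLcp_head_ne A B d hd (hcontra ▸ hd)
  · rw [List.length_drop]; omega
  · rw [List.length_drop]; omega
end

section
/- Let f: Γ → Γ be an expanding train track map representing an automorphism of F_N (so f is a homotopy equivalence with a cancellation bound). Then exactly one of the following holds: (a) f possesses a periodic INP, or (b) there exists k₀ such that for all k ≥ k₀ the map f^k is legalizing with respect to the intrinsic gate structure G(f). -/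
namespace INPProof
open List

/-- maximal common prefix -/
def mcp {α : Type} [DecidableEq α] : List α → List α → List α
  | a :: x, b :: y => if a = b then a :: mcp x y else []
  | _, _ => []

variable {α : Type} [DecidableEq α]

theorem mcp_prefix_left : ∀ (x y : List α), mcp x y <+: x
  | [], _ => by simp [mcp]
  | a :: x, [] => by simp [mcp]
  | a :: x, b :: y => by
    by_cases h : a = b
    · simp only [mcp, if_pos h]
      exact List.cons_prefix_cons.mpr ⟨rfl, mcp_prefix_left x y⟩
    · simp [mcp, h]

theorem mcp_prefix_right : ∀ (x y : List α), mcp x y <+: y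
  | [], _ => by simp [mcp]
  | a :: x, [] => by simp [mcp]
  | a :: x, b :: y => by
    by_cases h : a = b
    · subst h; simp only [mcp, if_pos rfl]
      exact List.cons_prefix_cons.mpr ⟨rfl, mcp_prefix_right x y⟩
    · simp [mcp, h]

theorem prefix_mcp : ∀ {p x y : List α}, p <+: x → p <+: y → p <+: mcp x y
  | [], _, _, _, _ => by simp
  | c :: p, a :: x, b :: y, hx, hy => by
    obtain ⟨rfl, hx2⟩ := List.cons_prefix_cons.mp hx
    obtain ⟨rfl, hy2⟩ := List.cons_prefix_cons.mp hy
    simp only [mcp, if_pos rfl]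
    exact List.cons_prefix_cons.mpr ⟨rfl, prefix_mcp hx2 hy2⟩
  | c :: p, [], _, hx, _ => by simp at hx
  | c :: p, _ :: _, [], _, hy => by simp at hy

theorem mcp_append : ∀ (x u v : List α), mcp (x ++ u) (x ++ v) = x ++ mcp u v
  | [], u, v => rfl
  | a :: x, u, v => by simp [mcp, mcp_append x u v]

/-- if the drops after the mcp are both nonempty, their heads differ -/
theorem mcp_drop_head_ne (x y : List α)
    (hx : x.drop (mcp x y).length ≠ []) (hy : y.drop (mcp x y).length ≠ []) :
    (x.drop (mcp x y).length).head? ≠ (y.drop (mcp x y).length).head? := by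
  intro h
  set m := mcp x y with hm
  have hxm : m <+: x := mcp_prefix_left x y
  have hym : m <+: y := mcp_prefix_right x y
  obtain ⟨e, he⟩ : ∃ e, (x.drop m.length).head? = some e := ⟨_, List.head?_eq_head hx⟩
  have he' : (y.drop m.length).head? = some e := by rw [← h, he]
  have hpx : m ++ [e] <+: x := by
    obtain ⟨t, ht⟩ := hxm
    have : x.drop m.length = t := by rw [← ht, List.drop_left]
    rcases t with _ | ⟨c, t⟩
    · exact absurd this.symm (by simpa [this] using hx)
    · have : c = e := by simp [this] at he; exact he
      subst this
      exact ⟨t, by simp [← ht]⟩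
  have hpy : m ++ [e] <+: y := by
    obtain ⟨t, ht⟩ := hym
    have : y.drop m.length = t := by rw [← ht, List.drop_left]
    rcases t with _ | ⟨c, t⟩
    · exact absurd this.symm (by simpa [this] using hy)
    · have : c = e := by simp [this] at he'; exact he'
      subst this
      exact ⟨t, by simp [← ht]⟩
  have := (prefix_mcp hpx hpy).length_le
  simp [← hm] at this
section Maps
open List GraphMap
variable {G : TTGraph} (f : GraphMap G G)

theorem mapPath_cons (e l) : f.mapPath (e :: l) = f.emap e ++ f.mapPath l :=
  List.flatMap_cons ..

theorem mapPath_append (x y) : f.mapPath (x ++ y) = f.mapPath x ++ f.mapPath y :=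
  List.flatMap_append ..

theorem mapPath_nil : f.mapPath [] = [] := rfl

theorem iterMap_zero (l) : f.iterMap 0 l = l := rfl

theorem iterMap_succ (t l) : f.iterMap (t + 1) l = f.iterMap t (f.mapPath l) :=
  Function.iterate_succ_apply ..

theorem iterMap_succ' (t l) : f.iterMap (t + 1) l = f.mapPath (f.iterMap t l) :=
  Function.iterate_succ_apply' ..

theorem iterMap_add (m n l) : f.iterMap (m + n) l = f.iterMap m (f.iterMap n l) :=
  Function.iterate_add_apply ..

theorem iterMap_nil (t) : f.iterMap t [] = [] := by
  induction t with
  | zero => rfl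
  | succ t ih => rw [iterMap_succ, mapPath_nil]; exact ih

theorem iterMap_append (t x y) :
    f.iterMap t (x ++ y) = f.iterMap t x ++ f.iterMap t y := by
  induction t generalizing x y with
  | zero => rfl
  | succ t ih => rw [iterMap_succ, mapPath_append, ih, iterMap_succ, iterMap_succ]

theorem iterMap_prefix (t) {x y : List G.E} (h : x <+: y) :
    f.iterMap t x <+: f.iterMap t y := by
  obtain ⟨r, rfl⟩ := h
  exact ⟨f.iterMap t r, (iterMap_append f t x r).symm⟩

theorem iterMap_flatMap (t l) :
    f.iterMap t l = l.flatMap (fun e => f.iterMap t [e]) := by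
  induction l with
  | nil => simp [iterMap_nil]
  | cons e l ih =>
      have h : e :: l = [e] ++ l := rfl
      rw [h, iterMap_append]
      simp [ih]

theorem length_le_mapPath (hne : ∀ e, f.emap e ≠ []) (l) :
    l.length ≤ (f.mapPath l).length := by
  induction l with
  | nil => simp [mapPath_nil]
  | cons e l ih =>
      rw [mapPath_cons, List.length_append, List.length_cons]
      have : 1 ≤ (f.emap e).length := List.length_pos_iff.mpr (hne e)
      omega

theorem length_le_iterMap (hne : ∀ e, f.emap e ≠ []) (t l) :
    l.length ≤ (f.iterMap t l).length := by
  induction t with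
  | zero => simp [iterMap_zero]
  | succ t ih => rw [iterMap_succ']; exact le_trans ih (length_le_mapPath f hne _)

theorem iterMap_ne_nil (hne : ∀ e, f.emap e ≠ []) (t) {l : List G.E} (h : l ≠ []) :
    f.iterMap t l ≠ [] := by
  intro h0
  have h1 := length_le_iterMap f hne t l
  rw [h0] at h1
  simp at h1
  exact h h1

theorem head?_mapPath (hne : ∀ e, f.emap e ≠ []) {l e} (he : l.head? = some e) :
    (f.mapPath l).head? = (f.emap e).head? := by
  rcases l with _ | ⟨a, l⟩
  · simp at he
  · simp only [List.head?_cons, Option.some.injEq] at he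
    subst he
    rw [mapPath_cons]
    rcases h : f.emap a with _ | ⟨b, r⟩
    · exact absurd h (hne a)
    · simp [h]

theorem head?_iterMap (hne : ∀ e, f.emap e ≠ []) (t) {l e} (he : l.head? = some e) :
    (f.iterMap t l).head? = (f.iterMap t [e]).head? := by
  induction t generalizing l e with
  | zero => rw [iterMap_zero, iterMap_zero, he]; rfl
  | succ t ih =>
      rw [iterMap_succ, iterMap_succ]
      have h1 : (f.mapPath l).head? = (f.emap e).head? := head?_mapPath f hne he
      have h2 : (f.mapPath [e]) = f.emap e := by simp [mapPath_cons, mapPath_nil]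
      rcases h : (f.emap e).head? with _ | d
      · exact absurd (List.head?_eq_none_iff.mp h) (hne e)
      · have h3 : (f.mapPath [e]).head? = some d := by rw [h2]; exact h
        rw [ih (h1.trans h), ih h3]

theorem init_head_iterMap (hne : ∀ e, f.emap e ≠ []) (s) {l : List G.E} {e d}
    (hl : l.head? = some e) (hd : (f.iterMap s l).head? = some d) :
    G.init d = f.vmap^[s] (G.init e) := by
  induction s generalizing l e with
  | zero =>
      rw [iterMap_zero, hl] at hd
      obtain rfl : e = d := by simpa using hd
      simp
  | succ s ih =>
      rw [iterMap_succ] at hd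
      rcases h1 : (f.emap e).head? with _ | e₁
      · exact absurd (List.head?_eq_none_iff.mp h1) (hne e)
      · have hm : (f.mapPath l).head? = some e₁ := (head?_mapPath f hne hl).trans h1
        have h2 := ih hm hd
        rw [h2, f.emap_head e e₁ h1, Function.iterate_succ_apply]

end Maps

section Main
open List GraphMap

theorem mcp_comm {α : Type} [DecidableEq α] : ∀ x y : List α, mcp x y = mcp y x
  | a :: x, b :: y => by
      by_cases h : a = b
      · subst h; simp [mcp, mcp_comm x y]
      · simp [mcp, h, Ne.symm h]
  | [], y => by cases y <;> simp [mcp]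
  | a :: x, [] => by simp [mcp]

variable {G : TTGraph} {S : GateStruct G} {f : GraphMap G G}

theorem legal_infix {l l' : List G.E} (h : Legal G S l) (hi : l' <:+: l) :
    Legal G S l' :=
  ⟨h.1.infix hi, h.2.infix hi⟩

theorem legal_iterMap (hTT : IsTT S S f) {l} (h : Legal G S l) (t : ℕ) :
    Legal G S (f.iterMap t l) := by
  induction t with
  | zero => exact h
  | succ t ih => rw [iterMap_succ']; exact hTT.2 _ ih

/-- if some positive power sends `e, e'` to paths with the same head, they are related -/
theorem rel_of_head_eq (hS : ∀ e e', S.rel e e' ↔ IntrinsicRel f e e')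
    (hne : ∀ e, f.emap e ≠ []) {e e' : G.E} (hinit : G.init e = G.init e')
    {u : ℕ} (hu : 1 ≤ u)
    (h : (f.iterMap u [e]).head? = (f.iterMap u [e']).head?) : S.rel e e' := by
  have h1 : f.iterMap u [e] ≠ [] := iterMap_ne_nil f hne u (by simp)
  rcases hd : (f.iterMap u [e]).head? with _ | d
  · exact absurd (List.head?_eq_none_iff.mp hd) h1
  · exact (hS e e').mpr ⟨hinit, u, hu, d, hd, by rw [← h, hd]⟩

/-- unrelated gates propagate to images -/
theorem not_rel_iter (hS : ∀ e e', S.rel e e' ↔ IntrinsicRel f e e')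
    (hne : ∀ e, f.emap e ≠ []) {e e' : G.E} (hinit : G.init e = G.init e')
    (hrel : ¬ S.rel e e') (u : ℕ) {d d'}
    (hd : (f.iterMap u [e]).head? = some d) (hd' : (f.iterMap u [e']).head? = some d') :
    ¬ S.rel d d' := by
  intro hdd
  obtain ⟨hinit', w, hw, c, hc, hc'⟩ := (hS d d').mp hdd
  apply hrel
  apply rel_of_head_eq hS hne hinit (u := w + u) (by omega)
  have he : (f.iterMap (w + u) [e]).head? = some c := by
    rw [iterMap_add]
    rw [head?_iterMap f hne w hd]
    exact hc
  have he' : (f.iterMap (w + u) [e']).head? = some c := by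
    rw [iterMap_add]
    rw [head?_iterMap f hne w hd']
    exact hc'
  rw [he, he']

theorem two_mul_length_le (T : ℕ) (hT : ∀ e : G.E, 2 ≤ (f.iterMap T [e]).length) :
    ∀ l : List G.E, 2 * l.length ≤ (f.iterMap T l).length := by
  intro l
  induction l with
  | nil => simp [iterMap_nil]
  | cons e l ih =>
      have h : e :: l = [e] ++ l := rfl
      rw [h, iterMap_append, List.length_append]
      have := hT e
      simp only [List.length_append, List.length_cons, List.length_nil]
      omega

theorem exists_doubling (hne : ∀ e, f.emap e ≠ []) (hexp : ExpandingTT f) :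
    ∃ T, 1 ≤ T ∧ ∀ l : List G.E, 2 * l.length ≤ (f.iterMap T l).length := by
  classical
  obtain ⟨T₁, hT₁⟩ : ∃ T₁, ∀ e : G.E, (hexp e).choose ≤ T₁ := by
    letI := G.fintE
    exact ⟨Finset.univ.sup (fun e : G.E => (hexp e).choose),
      fun e => by
        simpa using Finset.le_sup (f := fun e : G.E => (hexp e).choose) (Finset.mem_univ e)⟩
  refine ⟨T₁ + 1, by omega, two_mul_length_le (T₁ + 1) ?_⟩
  intro e
  obtain ⟨ht1, ht2⟩ := (hexp e).choose_spec
  have hle : (hexp e).choose ≤ T₁ + 1 := le_trans (hT₁ e) (by omega)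
  calc 2 ≤ (f.iterMap (hexp e).choose [e]).length := ht2
    _ ≤ (f.iterMap (T₁ + 1 - (hexp e).choose) (f.iterMap (hexp e).choose [e])).length :=
        length_le_iterMap f hne _ _
    _ = (f.iterMap (T₁ + 1) [e]).length := by
        rw [← iterMap_add, Nat.sub_add_cancel hle]

theorem exists_M : ∃ M : ℕ, ∀ l : List G.E, (f.mapPath l).length ≤ M * l.length := by
  classical
  letI := G.fintE
  refine ⟨Finset.univ.sup (fun e : G.E => (f.emap e).length), ?_⟩
  intro l
  induction l with
  | nil => simp [mapPath_nil]
  | cons e l ih =>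
      rw [mapPath_cons, List.length_append, List.length_cons, Nat.mul_add, Nat.mul_one]
      have : (f.emap e).length ≤ Finset.univ.sup (fun e : G.E => (f.emap e).length) :=
        Finset.le_sup (f := fun e : G.E => (f.emap e).length) (Finset.mem_univ e)
      omega

theorem head?_of_prefix_cons {x : G.E} {p l : List G.E} (h : x :: p <+: l) :
    l.head? = some x := by
  obtain ⟨t, ht⟩ := h
  rw [← ht]
  rfl

end Main

section Tails
open List GraphMap

theorem prefix_append_drop {α : Type} {p x : List α} (h : p <+: x) :
    p ++ x.drop p.length = x := by
  conv_rhs => rw [← List.take_append_drop p.length x]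
  rw [← List.prefix_iff_eq_take.mp h]

variable {G : TTGraph} [DecidableEq G.E] {S : GateStruct G} {f : GraphMap G G}

/-- the tails of a pair of paths after removing the maximal common prefix -/
def tl (x y : List G.E) : List G.E × List G.E :=
  (x.drop (mcp x y).length, y.drop (mcp x y).length)

/-- tails of the `k`-th iterated images -/
def tls (f : GraphMap G G) (γ γ' : List G.E) (k : ℕ) : List G.E × List G.E :=
  tl (f.iterMap k γ) (f.iterMap k γ')

theorem tl_eq_left (x y : List G.E) : mcp x y ++ (tl x y).1 = x :=
  prefix_append_drop (mcp_prefix_left x y)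

theorem tl_eq_right (x y : List G.E) : mcp x y ++ (tl x y).2 = y :=
  prefix_append_drop (mcp_prefix_right x y)

theorem tl_head_ne (x y : List G.E) (hx : (tl x y).1 ≠ []) (hy : (tl x y).2 ≠ []) :
    (tl x y).1.head? ≠ (tl x y).2.head? :=
  mcp_drop_head_ne x y hx hy

/-- the fundamental shift identity for tails -/
theorem tls_comp (γ γ' : List G.E) (s u : ℕ) :
    tls f γ γ' (u + s) =
      tl (f.iterMap u (tls f γ γ' s).1) (f.iterMap u (tls f γ γ' s).2) := by
  unfold tls
  set A := f.iterMap s γ with hA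
  set B := f.iterMap s γ' with hB
  have h1 : f.iterMap (u + s) γ = f.iterMap u (mcp A B) ++ f.iterMap u (tl A B).1 := by
    rw [iterMap_add, ← hA]
    conv_lhs => rw [← tl_eq_left A B]
    rw [iterMap_append]
  have h2 : f.iterMap (u + s) γ' = f.iterMap u (mcp A B) ++ f.iterMap u (tl A B).2 := by
    rw [iterMap_add, ← hB]
    conv_lhs => rw [← tl_eq_right A B]
    rw [iterMap_append]
  have hm : mcp (f.iterMap (u + s) γ) (f.iterMap (u + s) γ') =
      f.iterMap u (mcp A B) ++ mcp (f.iterMap u (tl A B).1) (f.iterMap u (tl A B).2) := by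
    rw [h1, h2, mcp_append]
  show tl _ _ = _
  unfold tl
  rw [hm, h1, h2]
  simp only [List.length_append]
  rw [List.drop_length_add_append, List.drop_length_add_append]
  rfl

theorem tls_nil_fwd {γ γ' : List G.E} {s : ℕ} (u : ℕ)
    (h : (tls f γ γ' s).1 = [] ∨ (tls f γ γ' s).2 = []) :
    (tls f γ γ' (u + s)).1 = [] ∨ (tls f γ γ' (u + s)).2 = [] := by
  rw [tls_comp γ γ' s u]
  rcases h with h | h <;> [left; right] <;>
    simp [tl, h, iterMap_nil]

/-- the two tails of a long turn form a long turn, provided they are non-empty -/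
theorem tls_long_turn (hTT : IsTT S S f) (hne : ∀ e, f.emap e ≠ [])
    {γ γ' : List G.E} (hlt : IsLongTurn G S γ γ') (s : ℕ)
    (ha : (tls f γ γ' s).1 ≠ []) (hb : (tls f γ γ' s).2 ≠ []) :
    IsLongTurn G S (tls f γ γ' s).1 (tls f γ γ' s).2 := by
  unfold tls at ha hb ⊢
  set A := f.iterMap s γ with hA
  set B := f.iterMap s γ' with hB
  have hLA : Legal G S A := legal_iterMap hTT hlt.1 s
  have hLB : Legal G S B := legal_iterMap hTT hlt.2.1 s
  have hlegA : Legal G S (tl A B).1 :=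
    legal_infix hLA ((List.drop_suffix _ _).isInfix)
  have hlegB : Legal G S (tl A B).2 :=
    legal_infix hLB ((List.drop_suffix _ _).isInfix)
  refine ⟨hlegA, hlegB, ha, hb, ?_⟩
  intro d d' hd hd'
  have hne' : (tl A B).1.head? ≠ (tl A B).2.head? := tl_head_ne A B ha hb
  refine ⟨?_, fun h => hne' (by rw [hd, hd', h])⟩
  -- same initial vertex
  rcases hP : mcp A B with _ | ⟨p, P⟩
  · -- empty common prefix: heads of A and B
    have h1 : (tl A B).1 = A := by
      show A.drop (mcp A B).length = A
      rw [hP]; rfl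
    have h2 : (tl A B).2 = B := by
      show B.drop (mcp A B).length = B
      rw [hP]; rfl
    obtain ⟨e, he⟩ : ∃ e, γ.head? = some e := by
      rcases γ with _ | ⟨e, γ⟩
      · exact absurd rfl hlt.2.2.1
      · exact ⟨e, rfl⟩
    obtain ⟨e', he'⟩ : ∃ e', γ'.head? = some e' := by
      rcases γ' with _ | ⟨e', γ'⟩
      · exact absurd rfl hlt.2.2.2.1
      · exact ⟨e', rfl⟩
    have hee' := (hlt.2.2.2.2 e e' he he').1
    have hi1 : G.init d = f.vmap^[s] (G.init e) :=
      init_head_iterMap f hne s he (by rw [← hA, ← h1, hd])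
    have hi2 : G.init d' = f.vmap^[s] (G.init e') :=
      init_head_iterMap f hne s he' (by rw [← hB, ← h2, hd'])
    rw [hi1, hi2, hee']
  · -- non-empty common prefix `p :: P`
    have hpath1 : G.IsPath (mcp A B ++ (tl A B).1) := by
      rw [tl_eq_left A B]; exact hLA.1
    have hpath2 : G.IsPath (mcp A B ++ (tl A B).2) := by
      rw [tl_eq_right A B]; exact hLB.1
    simp only [TTGraph.IsPath, List.Chain'] at hpath1 hpath2
    rw [List.isChain_append] at hpath1 hpath2
    rw [hP] at hpath1 hpath2
    have hx : (p :: P).getLast? = some ((p :: P).getLast (by simp)) :=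
      List.getLast?_eq_getLast _
    have e1 := hpath1.2.2 _ hx d hd
    have e2 := hpath2.2.2 _ hx d' hd'
    rw [← e1, ← e2]

end Tails

section Cancel
open List GraphMap
variable {G : TTGraph} [DecidableEq G.E] {S : GateStruct G} {f : GraphMap G G}

theorem cancel_zero : CancelBoundF S (f.iterMap 0) 0 := by
  intro γ γ' hlt p hp hp'
  rcases p with _ | ⟨x, p⟩
  · simp
  · rw [iterMap_zero] at hp hp'
    have h1 := head?_of_prefix_cons hp
    have h2 := head?_of_prefix_cons hp'
    exact absurd rfl (hlt.2.2.2.2 x x h1 h2).2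

theorem cancel_iter (hTT : IsTT S S f) (hne : ∀ e, f.emap e ≠ [])
    {Cb M : ℕ} (hCb : CancelBoundF S f.mapPath Cb)
    (hM : ∀ l, (f.mapPath l).length ≤ M * l.length) :
    ∀ k, ∃ c, CancelBoundF S (f.iterMap k) c := by
  intro k
  induction k with
  | zero => exact ⟨0, cancel_zero⟩
  | succ k ih =>
      obtain ⟨c, hc⟩ := ih
      refine ⟨M * c + Cb, ?_⟩
      intro γ γ' hlt p hp hp'
      set A := f.iterMap k γ with hA
      set B := f.iterMap k γ' with hB
      have hPc : (mcp A B).length ≤ c :=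
        hc γ γ' hlt _ (mcp_prefix_left A B) (mcp_prefix_right A B)
      rw [iterMap_succ'] at hp hp'
      rw [← hA] at hp
      rw [← hB] at hp'
      have hsplitA : f.mapPath A = f.mapPath (mcp A B) ++ f.mapPath (tl A B).1 := by
        conv_lhs => rw [← tl_eq_left A B]
        rw [mapPath_append]
      have hsplitB : f.mapPath B = f.mapPath (mcp A B) ++ f.mapPath (tl A B).2 := by
        conv_lhs => rw [← tl_eq_right A B]
        rw [mapPath_append]
      have hmcpLen : (f.mapPath (mcp A B)).length ≤ M * c :=
        le_trans (hM _) (Nat.mul_le_mul_left M hPc)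
      by_cases ha : (tl A B).1 = []
      · have hAP : A = mcp A B := by
          conv_lhs => rw [← tl_eq_left A B]
          rw [ha, List.append_nil]
        have h1 := hp.length_le
        rw [hAP] at h1
        omega
      by_cases hb : (tl A B).2 = []
      · have hBP : B = mcp A B := by
          conv_lhs => rw [← tl_eq_right A B]
          rw [hb, List.append_nil]
        have h1 := hp'.length_le
        rw [hBP] at h1
        omega
      · have hlt' : IsLongTurn G S (tl A B).1 (tl A B).2 :=
          tls_long_turn hTT hne hlt k ha hb
        rcases le_or_gt p.length (f.mapPath (mcp A B)).length with hle | hgt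
        · omega
        · have hpre : f.mapPath (mcp A B) <+: p := by
            refine prefix_of_prefix_length_le ⟨f.mapPath (tl A B).1, hsplitA.symm⟩ hp hgt.le
          obtain ⟨q, rfl⟩ := hpre
          rw [hsplitA] at hp
          rw [hsplitB] at hp'
          have hq1 : q <+: f.mapPath (tl A B).1 :=
            (List.prefix_append_right_inj _).mp hp
          have hq2 : q <+: f.mapPath (tl A B).2 :=
            (List.prefix_append_right_inj _).mp hp'
          have := hCb (tl A B).1 (tl A B).2 hlt' q hq1 hq2
          simp only [List.length_append]
          omega

variable {T Cg : ℕ}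

theorem step_branch (hdb : ∀ l : List G.E, 2 * l.length ≤ (f.iterMap T l).length)
    {a w σ : List G.E} (hσ : σ.length ≤ Cg) (hw : σ ++ w = f.iterMap T a) :
    σ ++ w.take (Cg + 1) <+: f.iterMap T (a.take (Cg + 1)) := by
  by_cases hlen : a.length ≤ Cg + 1
  · rw [List.take_of_length_le hlen, ← hw]
    exact (List.prefix_append_right_inj σ).mpr (List.take_prefix _ w)
  · push_neg at hlen
    have h1 : (a.take (Cg + 1)).length = Cg + 1 := by
      rw [List.length_take]; omega
    have h2 : 2 * (Cg + 1) ≤ (f.iterMap T (a.take (Cg + 1))).length := by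
      have := hdb (a.take (Cg + 1))
      rw [h1] at this
      exact this
    have hp1 : σ ++ w.take (Cg + 1) <+: f.iterMap T a := by
      rw [← hw]
      exact (List.prefix_append_right_inj σ).mpr (List.take_prefix _ w)
    have hp2 : f.iterMap T (a.take (Cg + 1)) <+: f.iterMap T a :=
      iterMap_prefix f T (List.take_prefix _ a)
    refine prefix_of_prefix_length_le hp1 hp2 ?_
    rw [List.length_append, List.length_take]
    omega

theorem tls_step (hTT : IsTT S S f) (hne : ∀ e, f.emap e ≠ [])
    {γ γ' : List G.E} (hlt : IsLongTurn G S γ γ')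
    (hCg : CancelBoundF S (f.iterMap T) Cg)
    (hdb : ∀ l : List G.E, 2 * l.length ≤ (f.iterMap T l).length)
    (s : ℕ) (ha : (tls f γ γ' s).1 ≠ []) (hb : (tls f γ γ' s).2 ≠ []) :
    ∃ σ : List G.E,
      σ ++ (tls f γ γ' (T + s)).1.take (Cg + 1) <+:
        f.iterMap T ((tls f γ γ' s).1.take (Cg + 1)) ∧
      σ ++ (tls f γ γ' (T + s)).2.take (Cg + 1) <+:
        f.iterMap T ((tls f γ γ' s).2.take (Cg + 1)) := by
  set a := (tls f γ γ' s).1 with hna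
  set b := (tls f γ γ' s).2 with hnb
  have hlt' : IsLongTurn G S a b := tls_long_turn hTT hne hlt s ha hb
  set σ := mcp (f.iterMap T a) (f.iterMap T b) with hσdef
  have hσ : σ.length ≤ Cg :=
    hCg a b hlt' σ (mcp_prefix_left _ _) (mcp_prefix_right _ _)
  have hcomp := tls_comp (f := f) γ γ' s T
  refine ⟨σ, ?_, ?_⟩
  · have hw : σ ++ (tls f γ γ' (T + s)).1 = f.iterMap T a := by
      rw [hcomp]
      exact tl_eq_left _ _
    exact step_branch hdb hσ hw
  · have hw : σ ++ (tls f γ γ' (T + s)).2 = f.iterMap T b := by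
      rw [hcomp]
      exact tl_eq_right _ _
    exact step_branch hdb hσ hw

theorem tls_chain (hTT : IsTT S S f) (hne : ∀ e, f.emap e ≠ [])
    {γ γ' : List G.E} (hlt : IsLongTurn G S γ γ')
    (hCg : CancelBoundF S (f.iterMap T) Cg)
    (hdb : ∀ l : List G.E, 2 * l.length ≤ (f.iterMap T l).length)
    {k : ℕ} (hnon : ∀ m, m ≤ k → (tls f γ γ' m).1 ≠ [] ∧ (tls f γ γ' m).2 ≠ [])
    (s : ℕ) :
    ∀ n, s + n * T ≤ k →
    ∃ ρ : List G.E,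
      ρ ++ (tls f γ γ' (s + n * T)).1.take (Cg + 1) <+:
        f.iterMap (n * T) ((tls f γ γ' s).1.take (Cg + 1)) ∧
      ρ ++ (tls f γ γ' (s + n * T)).2.take (Cg + 1) <+:
        f.iterMap (n * T) ((tls f γ γ' s).2.take (Cg + 1)) := by
  intro n
  induction n with
  | zero => intro _; exact ⟨[], by simp [iterMap_zero]⟩
  | succ n ih =>
      intro hk
      have hT0 : 0 ≤ T := Nat.zero_le T
      have hk' : s + n * T ≤ k := by
        have : n * T ≤ (n + 1) * T := Nat.mul_le_mul_right T (by omega)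
        omega
      obtain ⟨ρ, h1, h2⟩ := ih hk'
      obtain ⟨σ, g1, g2⟩ :=
        tls_step hTT hne hlt hCg hdb (s + n * T) (hnon _ hk').1 (hnon _ hk').2
      have hstage : s + (n + 1) * T = T + (s + n * T) := by ring
      have hiter : ∀ x : List G.E,
          f.iterMap ((n + 1) * T) x = f.iterMap T (f.iterMap (n * T) x) := by
        intro x
        rw [show (n + 1) * T = T + n * T by ring, iterMap_add]
      refine ⟨f.iterMap T ρ ++ σ, ?_, ?_⟩
      · rw [hstage, hiter]
        have ha1 := iterMap_prefix f T h1
        rw [iterMap_append] at ha1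
        have ha2 : (f.iterMap T ρ ++ σ) ++ (tls f γ γ' (T + (s + n * T))).1.take (Cg + 1) <+:
            f.iterMap T ρ ++ f.iterMap T ((tls f γ γ' (s + n * T)).1.take (Cg + 1)) := by
          rw [List.append_assoc]
          exact (List.prefix_append_right_inj _).mpr g1
        exact ha2.trans ha1
      · rw [hstage, hiter]
        have ha1 := iterMap_prefix f T h2
        rw [iterMap_append] at ha1
        have ha2 : (f.iterMap T ρ ++ σ) ++ (tls f γ γ' (T + (s + n * T))).2.take (Cg + 1) <+:
            f.iterMap T ρ ++ f.iterMap T ((tls f γ γ' (s + n * T)).2.take (Cg + 1)) := by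
          rw [List.append_assoc]
          exact (List.prefix_append_right_inj _).mpr g2
        exact ha2.trans ha1

end Cancel

section Assemble
open List GraphMap
variable {G : TTGraph} [DecidableEq G.E] {S : GateStruct G} {f : GraphMap G G}

theorem mcp_eq_nil_of_head_ne {α : Type} [DecidableEq α] {x y : List α}
    (h : x.head? ≠ y.head?) : mcp x y = [] := by
  rcases x with _ | ⟨a, x⟩
  · rfl
  · rcases y with _ | ⟨b, y⟩
    · rfl
    · have : a ≠ b := fun hab => h (by simp [hab])
      simp [mcp, this]

theorem head?_take_succ {α : Type} (n : ℕ) (l : List α) :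
    (l.take (n + 1)).head? = l.head? := by
  cases l <;> simp

theorem take_ne_nil_of_ne_nil {α : Type} (n : ℕ) {l : List α} (h : l ≠ []) :
    l.take (n + 1) ≠ [] := by
  cases l <;> simp_all

/-- the unique decomposition of an `f^k`-image of a long turn is given by `tls` -/
theorem lt_image_eq_tls {γ γ' δ δ' : List G.E} {k : ℕ}
    (hI : IsLTImageF (f.iterMap k) γ γ' δ δ') :
    δ = (tls f γ γ' k).1 ∧ δ' = (tls f γ γ' k).2 := by
  obtain ⟨γ₀, hγ, hγ', hδ, hδ', hhd⟩ := hI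
  set X := f.iterMap k γ with hX
  set Y := f.iterMap k γ' with hY
  have hp1 : γ₀ <+: X := ⟨δ, hγ.symm⟩
  have hp2 : γ₀ <+: Y := ⟨δ', hγ'.symm⟩
  have hpm : γ₀ <+: mcp X Y := prefix_mcp hp1 hp2
  have hlen : γ₀.length = (mcp X Y).length := by
    rcases Nat.lt_or_ge γ₀.length (mcp X Y).length with hlt | hge
    · exfalso
      apply hhd
      have hd1 : δ.head? = X[γ₀.length]? := by
        rw [hγ, ← List.head?_drop, List.drop_left]
      have hd2 : δ'.head? = Y[γ₀.length]? := by
        rw [hγ', ← List.head?_drop, List.drop_left]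
      have hg1 : X[γ₀.length]? = (mcp X Y)[γ₀.length]? := by
        conv_lhs => rw [← tl_eq_left X Y]
        rw [List.getElem?_append, if_pos hlt]
      have hg2 : Y[γ₀.length]? = (mcp X Y)[γ₀.length]? := by
        conv_lhs => rw [← tl_eq_right X Y]
        rw [List.getElem?_append, if_pos hlt]
      rw [hd1, hd2, hg1, hg2]
    · exact le_antisymm hpm.length_le hge
  have hγ₀ : γ₀ = mcp X Y := hpm.eq_of_length hlen
  constructor
  · have h1 : mcp X Y ++ (tl X Y).1 = mcp X Y ++ δ := by
      conv_lhs => rw [tl_eq_left X Y]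
      conv_lhs => rw [hγ]
      rw [hγ₀]
    exact (List.append_cancel_left h1).symm
  · have h1 : mcp X Y ++ (tl X Y).2 = mcp X Y ++ δ' := by
      conv_lhs => rw [tl_eq_right X Y]
      conv_lhs => rw [hγ']
      rw [hγ₀]
    exact (List.append_cancel_left h1).symm

/-- once a stage has head edges in distinct gates, so do all later stages -/
theorem legal_propagate (hS : ∀ e e', S.rel e e' ↔ IntrinsicRel f e e')
    (hne : ∀ e, f.emap e ≠ []) {γ γ' : List G.E} {s k : ℕ} (hsk : s ≤ k)
    {e e' d d' : G.E}
    (he : (tls f γ γ' s).1.head? = some e) (he' : (tls f γ γ' s).2.head? = some e')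
    (hinit : G.init e = G.init e') (hrel : ¬ S.rel e e')
    (hd : (tls f γ γ' k).1.head? = some d) (hd' : (tls f γ γ' k).2.head? = some d') :
    ¬ S.rel d d' := by
  obtain ⟨u, rfl⟩ : ∃ u, k = u + s := ⟨k - s, by omega⟩
  rcases Nat.eq_zero_or_pos u with h0 | hpos
  · subst h0
    simp only [Nat.zero_add] at hd hd'
    rw [hd] at he
    rw [hd'] at he'
    obtain rfl : d = e := by simpa using he
    obtain rfl : d' = e' := by simpa using he'
    exact hrel
  · have hcomp := tls_comp (f := f) γ γ' s u
    set a := (tls f γ γ' s).1 with hna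
    set b := (tls f γ γ' s).2 with hnb
    have hh1 : (f.iterMap u a).head? = (f.iterMap u [e]).head? :=
      head?_iterMap f hne u he
    have hh2 : (f.iterMap u b).head? = (f.iterMap u [e']).head? :=
      head?_iterMap f hne u he'
    have hne2 : (f.iterMap u [e]).head? ≠ (f.iterMap u [e']).head? := by
      intro hcon
      exact hrel (rel_of_head_eq hS hne hinit hpos hcon)
    have hmcp : mcp (f.iterMap u a) (f.iterMap u b) = [] :=
      mcp_eq_nil_of_head_ne (by rw [hh1, hh2]; exact hne2)
    have ht1 : (tls f γ γ' (u + s)).1 = f.iterMap u a := by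
      rw [hcomp]
      show (f.iterMap u a).drop (mcp (f.iterMap u a) (f.iterMap u b)).length = _
      rw [hmcp]
      rfl
    have ht2 : (tls f γ γ' (u + s)).2 = f.iterMap u b := by
      rw [hcomp]
      show (f.iterMap u b).drop (mcp (f.iterMap u a) (f.iterMap u b)).length = _
      rw [hmcp]
      rfl
    rw [ht1] at hd
    rw [ht2] at hd'
    exact not_rel_iter hS hne hinit hrel u (by rw [← hh1]; exact hd)
      (by rw [← hh2]; exact hd')

/-- encoding of bounded-length lists for the pigeonhole argument -/
def enc (C : ℕ) (l : List G.E) : Fin C → Option G.E := fun i => l[i.1]?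

theorem enc_inj {C : ℕ} {l l' : List G.E} (hl : l.length ≤ C) (hl' : l'.length ≤ C)
    (h : enc C l = enc C l') : l = l' := by
  apply List.ext_getElem?
  intro n
  rcases Nat.lt_or_ge n C with hn | hn
  · exact congrFun h ⟨n, hn⟩
  · rw [List.getElem?_eq_none (le_trans hl hn), List.getElem?_eq_none (le_trans hl' hn)]

end Assemble

section Final
open List GraphMap
variable {G : TTGraph} {S : GateStruct G} {f : GraphMap G G}

theorem head?_append_left {α : Type} {l : List α} (r : List α) (h : l ≠ []) :
    (l ++ r).head? = l.head? := by
  cases l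
  · exact absurd rfl h
  · rfl

/-- (a) ⇒ ¬(b): a periodic INP obstructs all high powers being legalizing -/
theorem not_legalizing_of_inp (hINP : HasPeriodicINP S f) :
    ¬ ∃ k₀, ∀ k, k₀ ≤ k → LegalizingF S S (f.iterMap k) := by
  rintro ⟨k₀, hk⟩
  obtain ⟨γ, γ', ρ, t, ht, hill, h1, h2⟩ := hINP
  have key : ∀ m : ℕ, ∃ σ : List G.E,
      (σ ++ γ) <+: f.iterMap ((m + 1) * t) γ ∧ (σ ++ γ') <+: f.iterMap ((m + 1) * t) γ' := by
    intro m
    induction m with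
    | zero =>
        refine ⟨ρ, ?_, ?_⟩ <;> rw [show (0 + 1) * t = t by ring] <;> assumption
    | succ m ih =>
        obtain ⟨σ, hσ1, hσ2⟩ := ih
        refine ⟨f.iterMap t σ ++ ρ, ?_, ?_⟩
        · rw [show (m + 1 + 1) * t = t + (m + 1) * t by ring, iterMap_add]
          have ha := iterMap_prefix f t hσ1
          rw [iterMap_append] at ha
          refine List.IsPrefix.trans ?_ ha
          rw [List.append_assoc]
          exact (List.prefix_append_right_inj _).mpr h1
        · rw [show (m + 1 + 1) * t = t + (m + 1) * t by ring, iterMap_add]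
          have ha := iterMap_prefix f t hσ2
          rw [iterMap_append] at ha
          refine List.IsPrefix.trans ?_ ha
          rw [List.append_assoc]
          exact (List.prefix_append_right_inj _).mpr h2
  obtain ⟨σ, hσ1, hσ2⟩ := key k₀
  set k := (k₀ + 1) * t with hkdef
  have hk₀k : k₀ ≤ k := by
    have : k₀ + 1 ≤ (k₀ + 1) * t := Nat.le_mul_of_pos_right _ ht
    omega
  obtain ⟨r, hr⟩ := hσ1
  obtain ⟨r', hr'⟩ := hσ2
  obtain ⟨hlt, dI, dI', hdI, hdI', hrelI⟩ := hill
  have hγne : γ ≠ [] := hlt.2.2.1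
  have hγ'ne : γ' ≠ [] := hlt.2.2.2.1
  have hne_dd : dI ≠ dI' := (hlt.2.2.2.2 dI dI' hdI hdI').2
  have hI : IsLTImageF (f.iterMap k) γ γ' (γ ++ r) (γ' ++ r') := by
    refine ⟨σ, by rw [← hr, List.append_assoc], by rw [← hr', List.append_assoc],
      by simp [hγne], by simp [hγ'ne], ?_⟩
    rw [head?_append_left r hγne, head?_append_left r' hγ'ne, hdI, hdI']
    simp [hne_dd]
  have hlegal := hk k hk₀k γ γ' (γ ++ r) (γ' ++ r')
    ⟨hlt, dI, dI', hdI, hdI', hrelI⟩ hI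
  exact hlegal dI dI' (by rw [head?_append_left r hγne]; exact hdI)
    (by rw [head?_append_left r' hγ'ne]; exact hdI') hrelI

/-- ¬(a) ⇒ (b): without periodic INPs, all high powers are legalizing -/
theorem legalizing_of_no_inp (hTT : IsTT S S f)
    (hS : ∀ e e', S.rel e e' ↔ IntrinsicRel f e e')
    (hexp : ExpandingTT f) (hCb : ∃ Cb, CancelBoundF S f.mapPath Cb)
    (hni : ¬ HasPeriodicINP S f) :
    ∃ k₀, ∀ k, k₀ ≤ k → LegalizingF S S (f.iterMap k) := by
  classical
  letI := G.decE
  letI := G.fintE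
  obtain ⟨Cb, hCb⟩ := hCb
  have hne : ∀ e, f.emap e ≠ [] := hTT.1
  obtain ⟨T, hT1, hdb⟩ := exists_doubling hne hexp
  obtain ⟨M, hM⟩ := exists_M (f := f)
  obtain ⟨Cg, hCg⟩ := cancel_iter hTT hne hCb hM T
  set N := Fintype.card ((Fin (Cg + 1) → Option G.E) × (Fin (Cg + 1) → Option G.E)) with hN
  refine ⟨(N + 2) * T, ?_⟩
  intro k hkbig γ γ' δ δ' hill hI
  obtain ⟨hlt, dI, dI', hdI, hdI', hrelI⟩ := hill
  obtain ⟨hδ, hδ'⟩ := lt_image_eq_tls hI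
  intro d d' hd hd'
  rw [hδ] at hd
  rw [hδ'] at hd'
  obtain ⟨γ₀, hγ0, hγ0', hδne, hδ'ne, hhd⟩ := hI
  rw [hδ] at hδne
  rw [hδ'] at hδ'ne
  -- all tails up to stage k are non-empty
  have hnon : ∀ m, m ≤ k → (tls f γ γ' m).1 ≠ [] ∧ (tls f γ γ' m).2 ≠ [] := by
    intro m hm
    have hcon : ¬ ((tls f γ γ' m).1 = [] ∨ (tls f γ γ' m).2 = []) := by
      intro hcon
      have h2 := tls_nil_fwd (f := f) (k - m) hcon
      rw [show k - m + m = k from by omega] at h2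
      rcases h2 with h2 | h2
      · exact hδne h2
      · exact hδ'ne h2
    exact ⟨fun h => hcon (Or.inl h), fun h => hcon (Or.inr h)⟩
  by_cases hall : ∀ s, s ≤ k → ∀ e e', (tls f γ γ' s).1.head? = some e →
      (tls f γ γ' s).2.head? = some e' → S.rel e e'
  · -- every stage is illegal: pigeonhole gives a periodic INP, contradiction
    exfalso
    apply hni
    obtain ⟨q, r, hrT, hkqr⟩ : ∃ q r, r < T ∧ k = r + q * T := by
      refine ⟨k / T, k % T, Nat.mod_lt k hT1, ?_⟩
      rw [Nat.add_comm]
      exact (Nat.div_add_mod' k T).symm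
    have hqN : N + 1 ≤ q := by
      by_contra hqc
      push_neg at hqc
      have hlt2 : k < (N + 2) * T := by
        calc k = r + q * T := hkqr
          _ < T + (N + 1) * T :=
              Nat.add_lt_add_of_lt_of_le hrT (Nat.mul_le_mul_right T (by omega))
          _ = (N + 2) * T := by ring
      omega
    set F : Fin (N + 1) → ((Fin (Cg + 1) → Option G.E) × (Fin (Cg + 1) → Option G.E)) :=
      fun j => (enc (Cg + 1) ((tls f γ γ' (r + j.1 * T)).1.take (Cg + 1)),
                enc (Cg + 1) ((tls f γ γ' (r + j.1 * T)).2.take (Cg + 1))) with hF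
    have hcard : Fintype.card ((Fin (Cg + 1) → Option G.E) × (Fin (Cg + 1) → Option G.E)) <
        Fintype.card (Fin (N + 1)) := by
      rw [Fintype.card_fin, ← hN]
      omega
    obtain ⟨i0, j0, hij0, hFij0⟩ := Fintype.exists_ne_map_eq_of_card_lt F hcard
    obtain ⟨i, j, hij, hFij⟩ : ∃ i j : Fin (N + 1), i.1 < j.1 ∧ F i = F j := by
      rcases Ne.lt_or_gt hij0 with h | h
      exacts [⟨i0, j0, h, hFij0⟩, ⟨j0, i0, h, hFij0.symm⟩]
    set si := r + i.1 * T with hsi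
    have hstageJ : si + (j.1 - i.1) * T = r + j.1 * T := by
      have h1 : i.1 * T + (j.1 - i.1) * T = j.1 * T := by
        rw [← Nat.add_mul]
        congr 1
        omega
      omega
    have hsjk : r + j.1 * T ≤ k := by
      have hj : j.1 ≤ q := by have := j.isLt; omega
      have := Nat.mul_le_mul_right T hj
      omega
    have hsik : si ≤ k := by
      have := Nat.mul_le_mul_right T (le_of_lt hij)
      omega
    obtain ⟨ρ, hc1, hc2⟩ := tls_chain hTT hne hlt hCg hdb hnon si (j.1 - i.1)
      (by rw [hstageJ]; exact hsjk)
    have htk1 : (tls f γ γ' (r + j.1 * T)).1.take (Cg + 1) =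
        (tls f γ γ' si).1.take (Cg + 1) := by
      refine enc_inj (List.length_take_le _ _) (List.length_take_le _ _) ?_
      have := congrArg Prod.fst hFij
      simp only [hF] at this
      exact this.symm
    have htk2 : (tls f γ γ' (r + j.1 * T)).2.take (Cg + 1) =
        (tls f γ γ' si).2.take (Cg + 1) := by
      refine enc_inj (List.length_take_le _ _) (List.length_take_le _ _) ?_
      have := congrArg Prod.snd hFij
      simp only [hF] at this
      exact this.symm
    rw [hstageJ, htk1] at hc1
    rw [hstageJ, htk2] at hc2
    have hnon_i := hnon si hsik
    have hlts := tls_long_turn hTT hne hlt si hnon_i.1 hnon_i.2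
    obtain ⟨ea, hea⟩ : ∃ ea, (tls f γ γ' si).1.head? = some ea :=
      ⟨(tls f γ γ' si).1.head hnon_i.1, List.head?_eq_head hnon_i.1⟩
    obtain ⟨eb, heb⟩ : ∃ eb, (tls f γ γ' si).2.head? = some eb :=
      ⟨(tls f γ γ' si).2.head hnon_i.2, List.head?_eq_head hnon_i.2⟩
    have hteq1 : ((tls f γ γ' si).1.take (Cg + 1)).head? = (tls f γ γ' si).1.head? :=
      head?_take_succ _ _
    have hteq2 : ((tls f γ γ' si).2.take (Cg + 1)).head? = (tls f γ γ' si).2.head? :=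
      head?_take_succ _ _
    refine ⟨(tls f γ γ' si).1.take (Cg + 1), (tls f γ γ' si).2.take (Cg + 1), ρ,
      (j.1 - i.1) * T, Nat.mul_pos (by omega) hT1, ?_, hc1, hc2⟩
    refine ⟨⟨legal_infix hlts.1 ((List.take_prefix _ _).isInfix),
        legal_infix hlts.2.1 ((List.take_prefix _ _).isInfix),
        take_ne_nil_of_ne_nil _ hnon_i.1, take_ne_nil_of_ne_nil _ hnon_i.2, ?_⟩,
      ea, eb, by rw [hteq1]; exact hea, by rw [hteq2]; exact heb,
      hall si hsik ea eb hea heb⟩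
    intro x x' hx hx'
    rw [hteq1] at hx
    rw [hteq2] at hx'
    exact hlts.2.2.2.2 x x' hx hx'
  · push_neg at hall
    obtain ⟨s, hsk, e, e', he, he', hnrel⟩ := hall
    have ha : (tls f γ γ' s).1 ≠ [] := fun h => by simp [h] at he
    have hb : (tls f γ γ' s).2 ≠ [] := fun h => by simp [h] at he'
    have hltts := tls_long_turn hTT hne hlt s ha hb
    have hinit : G.init e = G.init e' := (hltts.2.2.2.2 e e' he he').1
    exact legal_propagate hS hne hsk he he' hinit hnrel hd hd'

end Final

end INPProof

/-- for an expanding train track map `f` representing an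
automorphism of `F_N` (whence possessing a cancellation bound), exactly one of
the following holds: (a) `f` possesses a periodic INP, or (b) all sufficiently
high powers of `f` are legalizing with respect to the intrinsic gate structure
`G(f)` (here `S` is the intrinsic gate structure). -/
theorem INP_alternative {G : TTGraph} (S : GateStruct G) (f : GraphMap G G)
    (hTT : IsTT S S f)
    (hS : ∀ e e', S.rel e e' ↔ IntrinsicRel f e e')
    (hexp : ExpandingTT f)
    (hCb : ∃ Cb, CancelBoundF S f.mapPath Cb) :
    Xor' (HasPeriodicINP S f)
      (∃ k₀, ∀ k, k₀ ≤ k → LegalizingF S S (f.iterMap k)) := by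
  rcases Classical.em (HasPeriodicINP S f) with h | h
  · exact Or.inl ⟨h, INPProof.not_legalizing_of_inp h⟩
  · exact Or.inr ⟨INPProof.legalizing_of_no_inp hTT hS hexp hCb h, h⟩
end

section
/- Let f and g be train track self-morphisms of Γ with respect to G := G(f), where g induces an automorphism of π₁(Γ) and is gate-stable. Then for every vertex v of Γ, the gate-Whitehead-graph Wh_G^v(f) is a subgraph of both Wh_G^v(f∘g) and Wh_G^v(g∘f). -/
section WhAux

variable {G : TTGraph} {S : GateStruct G}

private lemma pair_infix_append {α : Type} {u w : α} {A B : List α} (h : [u,w] <:+: A ++ B) :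
    [u,w] <:+: A ∨ [u,w] <:+: B ∨ (A.getLast? = some u ∧ B.head? = some w) := by
  induction A with
  | nil => exact Or.inr (Or.inl (by simpa using h))
  | cons x A' ih =>
    rw [List.cons_append, List.infix_cons_iff] at h
    rcases h with hp | hi
    · rcases hp with ⟨t, ht⟩
      simp only [List.cons_append, List.nil_append, List.cons.injEq] at ht
      obtain ⟨rfl, ht2⟩ := ht
      cases A' with
      | nil =>
        refine Or.inr (Or.inr ⟨by simp, ?_⟩)
        rw [List.nil_append] at ht2
        rw [← ht2]; rfl
      | cons z A'' =>
        have hw : w = z := by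
          have := congrArg List.head? ht2; simpa using this
        subst hw
        exact Or.inl ⟨[], A'', by simp⟩
    · rcases ih hi with h1 | h1 | ⟨hl, hh⟩
      · exact Or.inl (List.infix_cons h1)
      · exact Or.inr (Or.inl h1)
      · refine Or.inr (Or.inr ⟨?_, hh⟩)
        cases A' with
        | nil => simp at hl
        | cons z A'' => rw [List.getLast?_cons_cons]; exact hl

private lemma pair_infix_flatMap {α : Type} (F : α → List α) (hF : ∀ c, F c ≠ []) :
    ∀ (l : List α) {u w : α}, [u,w] <:+: l.flatMap F →
      (∃ c ∈ l, [u,w] <:+: F c) ∨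
      ∃ p q, [p,q] <:+: l ∧ (F p).getLast? = some u ∧ (F q).head? = some w := by
  intro l
  induction l with
  | nil => intro u w h; simp at h
  | cons c r ih =>
    intro u w h
    rw [List.flatMap_cons] at h
    rcases pair_infix_append h with h1 | h1 | ⟨hl, hh⟩
    · exact Or.inl ⟨c, List.mem_cons_self .., h1⟩
    · rcases ih h1 with ⟨c', hc', hi⟩ | ⟨p, q, hpq, hu, hw⟩
      · exact Or.inl ⟨c', List.mem_cons_of_mem _ hc', hi⟩
      · exact Or.inr ⟨p, q, List.infix_cons hpq, hu, hw⟩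
    · cases r with
      | nil => simp at hh
      | cons q r' =>
        refine Or.inr ⟨c, q, ⟨[], r', by simp⟩, hl, ?_⟩
        rw [List.flatMap_cons, List.head?_append] at hh
        cases hq : (F q).head? with
        | none => exact absurd (List.head?_eq_none_iff.mp hq) (hF q)
        | some w' => rw [hq] at hh; simpa using hh

private lemma flatMap_comp {α : Type} (F H : α → List α) :
    ∀ l : List α, l.flatMap (fun e => (F e).flatMap H) = (l.flatMap F).flatMap H := by
  intro l
  induction l with
  | nil => simp
  | cons x r ih => simp [List.flatMap_cons, List.flatMap_append, ih]

private lemma head?_emap_bar (f : GraphMap G G) {x u : G.E}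
    (h : (f.emap x).getLast? = some u) :
    (f.emap (G.bar x)).head? = some (G.bar u) := by
  rw [f.emap_bar, List.head?_map, List.head?_reverse, h]; rfl

private lemma head_iter_stable (f : GraphMap G G) (hne : ∀ e, f.emap e ≠ []) :
    ∀ (s : ℕ) (x : G.E) (r r' : List G.E),
      (f.mapPath^[s] (x :: r)).head? = (f.mapPath^[s] (x :: r')).head? := by
  intro s
  induction s with
  | zero => simp
  | succ s ih =>
    intro x r r'
    rw [Function.iterate_succ_apply, Function.iterate_succ_apply]
    show (f.mapPath^[s] ((x :: r).flatMap f.emap)).head? =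
      (f.mapPath^[s] ((x :: r').flatMap f.emap)).head?
    rw [List.flatMap_cons, List.flatMap_cons]
    cases hfx : f.emap x with
    | nil => exact absurd hfx (hne x)
    | cons d q => rw [List.cons_append, List.cons_append]; exact ih d _ _

/-- Gates map to gates: the intrinsic gate relation is respected by taking
heads of `f`-images. -/
private lemma relF (f : GraphMap G G) (hne : ∀ e, f.emap e ≠ [])
    (hSf : ∀ e e', S.rel e e' ↔ IntrinsicRel f e e')
    {p q dp dq : G.E} (hrel : S.rel p q)
    (hp : (f.emap p).head? = some dp) (hq : (f.emap q).head? = some dq) :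
    S.rel dp dq := by
  rcases (hSf p q).1 hrel with ⟨hinit, t, ht, d, hd1, hd2⟩
  have hinit' : G.init dp = G.init dq := by
    rw [f.emap_head p dp hp, f.emap_head q dq hq, hinit]
  have key : ∀ (x dx : G.E), (f.emap x).head? = some dx → ∀ s : ℕ,
      (f.mapPath^[s+1] [x]).head? = (f.mapPath^[s] [dx]).head? := by
    intro x dx hdx s
    rw [Function.iterate_succ_apply]
    have h1 : f.mapPath [x] = f.emap x := by
      show [x].flatMap f.emap = f.emap x; simp
    rw [h1]
    rcases List.head?_eq_some_iff.1 hdx with ⟨ys, hys⟩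
    rw [hys]
    exact head_iter_stable f hne s dx ys []
  obtain ⟨s, rfl⟩ : ∃ s, t = s + 1 := ⟨t - 1, by omega⟩
  have hd1' := hd1; have hd2' := hd2
  rw [show f.iterMap (s+1) = f.mapPath^[s+1] from rfl] at hd1' hd2'
  rw [key p dp hp s] at hd1'
  rw [key q dq hq s] at hd2'
  cases s with
  | zero =>
    simp only [Function.iterate_zero, id_eq, List.head?_cons, Option.some.injEq] at hd1' hd2'
    rw [hd1', hd2']; exact S.refl d
  | succ s' =>
    exact (hSf dp dq).2 ⟨hinit', s'+1, by omega, d, hd1', hd2'⟩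

private lemma cross_mono {l : List G.E} {a' b' a b : G.E}
    (h : CrossesGT S l a' b') (ha : S.rel a' a) (hb : S.rel b' b) :
    CrossesGT S l a b := by
  rcases h with ⟨x, y, hxy, ⟨h1, h2⟩ | ⟨h1, h2⟩⟩
  · exact ⟨x, y, hxy, Or.inl ⟨S.trans h1 ha, S.trans h2 hb⟩⟩
  · exact ⟨x, y, hxy, Or.inr ⟨S.trans h1 hb, S.trans h2 ha⟩⟩

private lemma cross_symm {l : List G.E} {a b : G.E} (h : CrossesGT S l a b) :
    CrossesGT S l b a := by
  rcases h with ⟨x, y, hxy, h | h⟩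
  · exact ⟨x, y, hxy, Or.inr h⟩
  · exact ⟨x, y, hxy, Or.inl h⟩

private lemma cross_infix {l m : List G.E} {a b : G.E}
    (hlm : l <:+: m) (h : CrossesGT S l a b) : CrossesGT S m a b := by
  rcases h with ⟨x, y, hxy, hr⟩
  exact ⟨x, y, hxy.trans hlm, hr⟩

private lemma cross_rev {l : List G.E} {a b : G.E} (h : CrossesGT S l a b) :
    CrossesGT S (l.reverse.map G.bar) a b := by
  rcases h with ⟨x, y, hxy, hr⟩
  refine ⟨G.bar y, G.bar x, ?_, ?_⟩
  · have h1 : ([x, y].reverse : List G.E) <:+: l.reverse := List.reverse_infix.2 hxy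
    have h2 := h1.map G.bar
    simpa using h2
  · rcases hr with ⟨h1, h2⟩ | ⟨h1, h2⟩
    · exact Or.inr ⟨by rw [G.bar_bar]; exact h2, h1⟩
    · exact Or.inl ⟨by rw [G.bar_bar]; exact h2, h1⟩

/-- A crossed pair maps to a crossed pair (last edge of first image, head of
second image) under any graph map with no contracted edges. -/
private lemma mapPath_pair (f : GraphMap G G) (hne : ∀ e, f.emap e ≠ [])
    {x y : G.E} {l : List G.E} (h : [x, y] <:+: l) :
    ∃ u w, [u, w] <:+: f.mapPath l ∧
      (f.emap x).getLast? = some u ∧ (f.emap y).head? = some w := by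
  rcases h with ⟨r, s, hrs⟩
  obtain ⟨u, hu⟩ : ∃ u, (f.emap x).getLast? = some u := by
    cases hc : (f.emap x).getLast? with
    | none => exact absurd (List.getLast?_eq_none_iff.mp hc) (hne x)
    | some u => exact ⟨u, rfl⟩
  obtain ⟨w, hw⟩ : ∃ w, (f.emap y).head? = some w := by
    cases hc : (f.emap y).head? with
    | none => exact absurd (List.head?_eq_none_iff.mp hc) (hne y)
    | some w => exact ⟨w, rfl⟩
  refine ⟨u, w, ?_, hu, hw⟩
  rcases List.getLast?_eq_some_iff.1 hu with ⟨α, hα⟩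
  rcases List.head?_eq_some_iff.1 hw with ⟨β, hβ⟩
  refine ⟨f.mapPath r ++ α, β ++ f.mapPath s, ?_⟩
  rw [← hrs]
  show (r.flatMap f.emap ++ α) ++ [u, w] ++ (β ++ s.flatMap f.emap) =
    (r ++ [x, y] ++ s).flatMap f.emap
  rw [List.flatMap_append, List.flatMap_append, List.flatMap_cons, List.flatMap_cons,
    List.flatMap_nil, hα, hβ]
  simp [List.append_assoc]

/-- A gate-stable train track map preserves crossings of gate turns. -/
private lemma cross_g (g : GraphMap G G) (hne : ∀ e, g.emap e ≠ [])
    (hgs : GateStable S g) {l : List G.E} {a b : G.E}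
    (h : CrossesGT S l a b) : CrossesGT S (g.mapPath l) a b := by
  rcases h with ⟨x, y, hxy, hrel⟩
  obtain ⟨u, w, hinf, hu, hw⟩ := mapPath_pair g hne hxy
  have hrw : S.rel y w := hgs.2 y w hw
  have hbu : S.rel (G.bar x) (G.bar u) := hgs.2 (G.bar x) (G.bar u) (head?_emap_bar g hu)
  refine ⟨u, w, hinf, ?_⟩
  rcases hrel with ⟨h1, h2⟩ | ⟨h1, h2⟩
  · exact Or.inl ⟨S.trans (S.symm hbu) h1, S.trans (S.symm hrw) h2⟩
  · exact Or.inr ⟨S.trans (S.symm hbu) h1, S.trans (S.symm hrw) h2⟩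

/-- `f` maps a crossing of the gate turn `(a', b')` to a crossing of the
`D²f`-image gate turn, represented by the heads of the `f`-images. -/
private lemma cross_f (f : GraphMap G G) (hne : ∀ e, f.emap e ≠ [])
    (hSf : ∀ e e', S.rel e e' ↔ IntrinsicRel f e e')
    {l : List G.E} {a' b' da db : G.E}
    (hda : (f.emap a').head? = some da) (hdb : (f.emap b').head? = some db)
    (h : CrossesGT S l a' b') : CrossesGT S (f.mapPath l) da db := by
  rcases h with ⟨x, y, hxy, hrel⟩
  obtain ⟨u, w, hinf, hu, hw⟩ := mapPath_pair f hne hxy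
  have hbarx : (f.emap (G.bar x)).head? = some (G.bar u) := head?_emap_bar f hu
  refine ⟨u, w, hinf, ?_⟩
  rcases hrel with ⟨h1, h2⟩ | ⟨h1, h2⟩
  · exact Or.inl ⟨relF f hne hSf h1 hbarx hda, relF f hne hSf h2 hw hdb⟩
  · exact Or.inr ⟨relF f hne hSf h1 hbarx hdb, relF f hne hSf h2 hw hda⟩

end WhAux

/-- for train track self-morphisms `f, g` with respect to
`S = G(f)`, where `g` is gate-stable and induces an automorphism of `π₁(Γ)`
(whence — the graph having no valence-1 vertices — every edge occurs in the
image of some edge under `g`), the gate-Whitehead-graph of `f` at every vertex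
is a subgraph of those of `f ∘ g` (= `h₁`) and of `g ∘ f` (= `h₂`). -/
theorem whitehead_subgraph {G : TTGraph} (S : GateStruct G)
    (f g h₁ h₂ : GraphMap G G)
    (hTTf : IsTT S S f) (hSf : ∀ e e', S.rel e e' ↔ IntrinsicRel f e e')
    (hTTg : IsTT S S g) (hgs : GateStable S g)
    (hsurj : ∀ e, ∃ e', e ∈ g.emap e' ∨ G.bar e ∈ g.emap e')
    (h1 : IsComp h₁ f g) (h2 : IsComp h₂ g f) :
    ∀ v a b, WhEdge S f v a b → WhEdge S h₁ v a b ∧ WhEdge S h₂ v a b := by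
  have hne_f := hTTf.1
  have hne_g := hTTg.1
  have map1 : ∀ l, h₁.mapPath l = f.mapPath (g.mapPath l) := by
    intro l
    show l.flatMap h₁.emap = (l.flatMap g.emap).flatMap f.emap
    rw [← flatMap_comp]
    have he : h₁.emap = fun e => (g.emap e).flatMap f.emap := funext h1.2
    rw [he]
  have map2 : ∀ l, h₂.mapPath l = g.mapPath (f.mapPath l) := by
    intro l
    show l.flatMap h₂.emap = (l.flatMap f.emap).flatMap g.emap
    rw [← flatMap_comp]
    have he : h₂.emap = fun e => (f.emap e).flatMap g.emap := funext h2.2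
    rw [he]
  have main : ∀ t, 1 ≤ t → ∀ e a b, CrossesGT S (f.mapPath^[t] [e]) a b →
      (∃ t', 1 ≤ t' ∧ ∃ e₁, CrossesGT S (h₁.mapPath^[t'] [e₁]) a b) ∧
      (∃ t', 1 ≤ t' ∧ ∃ e₁, CrossesGT S (h₂.mapPath^[t'] [e₁]) a b) := by
    intro t
    induction t with
    | zero => intro h; omega
    | succ t ih =>
      intro _ e a b h
      rw [Function.iterate_succ_apply'] at h
      obtain ⟨u, w, hinf, hrel⟩ := h
      have hinf' : [u, w] <:+: (f.mapPath^[t] [e]).flatMap f.emap := hinf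
      rcases pair_infix_flatMap f.emap hne_f _ hinf' with ⟨c, hc, hcinf⟩ | ⟨p, q, hpq, hu, hw⟩
      · -- the crossing lies inside the image of a single edge `c`
        have hcross : CrossesGT S (f.emap c) a b := ⟨u, w, hcinf, hrel⟩
        constructor
        · -- h₁ = f ∘ g : use an edge `c'` with `c` (or `bar c`) in `g(c')`
          obtain ⟨c', hc'⟩ := hsurj c
          refine ⟨1, le_refl 1, c', ?_⟩
          have hmap : h₁.mapPath^[1] [c'] = (g.emap c').flatMap f.emap := by
            rw [Function.iterate_one, map1]
            show ([c'].flatMap g.emap).flatMap f.emap = _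
            simp
          rw [hmap]
          rcases hc' with hmem | hmem
          · obtain ⟨α, β, hab⟩ := List.append_of_mem hmem
            rw [hab]
            refine cross_infix ⟨α.flatMap f.emap, β.flatMap f.emap, ?_⟩ hcross
            simp [List.flatMap_append, List.flatMap_cons, List.append_assoc]
          · obtain ⟨α, β, hab⟩ := List.append_of_mem hmem
            rw [hab]
            have hcross' : CrossesGT S (f.emap (G.bar c)) a b := by
              rw [f.emap_bar]; exact cross_rev hcross
            refine cross_infix ⟨α.flatMap f.emap, β.flatMap f.emap, ?_⟩ hcross'
            simp [List.flatMap_append, List.flatMap_cons, List.append_assoc]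
        · -- h₂ = g ∘ f
          refine ⟨1, le_refl 1, c, ?_⟩
          have hmap : h₂.mapPath^[1] [c] = g.mapPath (f.emap c) := by
            rw [Function.iterate_one, map2]
            congr 1
            show [c].flatMap f.emap = f.emap c
            simp
          rw [hmap]
          exact cross_g g hne_g hgs hcross
      · -- the crossing arises at a junction between images of consecutive edges
        have ht1 : 1 ≤ t := by
          rcases Nat.eq_zero_or_pos t with rfl | h'
          · exfalso; have := hpq.length_le; simp at this
          · exact h'
        have hcpq : CrossesGT S (f.mapPath^[t] [e]) (G.bar p) q :=
          ⟨p, q, hpq, Or.inl ⟨S.refl _, S.refl _⟩⟩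
        obtain ⟨⟨t₁, ht₁, e₁, hc₁⟩, ⟨t₂, ht₂, e₂, hc₂⟩⟩ := ih ht1 e (G.bar p) q hcpq
        have hdu : (f.emap (G.bar p)).head? = some (G.bar u) := head?_emap_bar f hu
        have adjust : ∀ {m : List G.E}, CrossesGT S m (G.bar u) w → CrossesGT S m a b := by
          intro m hm
          rcases hrel with ⟨h1', h2'⟩ | ⟨h1', h2'⟩
          · exact cross_mono hm h1' h2'
          · exact cross_symm (cross_mono hm h1' h2')
        constructor
        · refine ⟨t₁ + 1, by omega, e₁, ?_⟩
          rw [Function.iterate_succ_apply', map1]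
          exact adjust (cross_f f hne_f hSf hdu hw (cross_g g hne_g hgs hc₁))
        · refine ⟨t₂ + 1, by omega, e₂, ?_⟩
          rw [Function.iterate_succ_apply', map2]
          exact adjust (cross_g g hne_g hgs (cross_f f hne_f hSf hdu hw hc₂))
  intro v a b hwh
  obtain ⟨ha, hb, t, ht, e, hcross⟩ := hwh
  obtain ⟨⟨t₁, ht₁, e₁, hc₁⟩, ⟨t₂, ht₂, e₂, hc₂⟩⟩ := main t ht e a b hcross
  exact ⟨⟨ha, hb, t₁, ht₁, e₁, hc₁⟩, ⟨ha, hb, t₂, ht₂, e₂, hc₂⟩⟩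
end
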